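/- arXiv:1605.08669 — 11 statements merged into one kernel-verified Lean document; each statement's English description precedes it below -/
import Mathlib

section
/- Assume no three of the control points are collinear (λi ≠ 0 for i = 0,1,2,3). Then for every t ∈ ℝ with w(t) ≠ 0, q(p(t)) = 0; that is, the cubic polynomial q vanishes identically along the rational cubic Bézier curve. -/
noncomputable section

/-- Determinant of the matrix [[x, y, 1], [a₁, a₂, 1], [b₁, b₂, 1]]. -/
def det3 (x y a₁ a₂ b₁ b₂ : ℝ) : ℝ :=
  x * (a₂ - b₂) - y * (a₁ - b₁) + (a₁ * b₂ - a₂ * b₁)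

/-- L_{ij}(x,y): the implicit linear form of the line through points `p` and `q`. -/
def lineL (p q : ℝ × ℝ) (x y : ℝ) : ℝ := det3 x y p.1 p.2 q.1 q.2

/-- λ_{ijk}: determinant of [[p₁,p₂,1],[q₁,q₂,1],[r₁,r₂,1]]. -/
def lam (p q r : ℝ × ℝ) : ℝ := det3 p.1 p.2 q.1 q.2 r.1 r.2

/-- Gradient of a bivariate function. -/
def grad (f : ℝ → ℝ → ℝ) (x y : ℝ) : ℝ × ℝ :=
  (deriv (fun s => f s y) x, deriv (fun s => f x s) y)

/-- if no three control points are collinear, the implicit polynomial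
`q` vanishes identically along the rational cubic Bézier curve. -/
theorem bezier_implicit_vanishes_on_curve (c0 c1 c2 c3 : ℝ × ℝ) (w0 w1 w2 w3 : ℝ)
    (u0 u1 u2 u3 : ℝ)
    (hu0 : u0 = w0) (hu1 : u1 = 3 * w1) (hu2 : u2 = 3 * w2) (hu3 : u3 = w3)
    (l0 l1 l2 l3 : ℝ)
    (hl0 : l0 = lam c3 c2 c1) (hl1 : l1 = lam c2 c3 c0)
    (hl2 : l2 = lam c1 c0 c3) (hl3 : l3 = lam c0 c1 c2)
    (hnc0 : l0 ≠ 0) (hnc1 : l1 ≠ 0) (hnc2 : l2 ≠ 0) (hnc3 : l3 ≠ 0)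
    (K0 K1 K2 K3 : ℝ → ℝ → ℝ)
    (hK0 : ∀ x y, K0 x y = lineL c0 c1 x y * lineL c1 c2 x y * lineL c2 c3 x y)
    (hK1 : ∀ x y, K1 x y = lineL c0 c1 x y * (lineL c1 c3 x y) ^ 2)
    (hK2 : ∀ x y, K2 x y = (lineL c0 c2 x y) ^ 2 * lineL c2 c3 x y)
    (hK3 : ∀ x y, K3 x y = (lineL c0 c3 x y) ^ 3)
    (U L b0 b1 b2 b3 : ℝ)
    (hU : U = u0 * u1 * u2 * u3) (hL : L = l0 * l1 * l2 * l3)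
    (hb0 : b0 = -(l1 ^ 2 * l2 ^ 2 * U - u1 ^ 2 * u2 ^ 2 * L))
    (hb1 : b1 = l1 ^ 3 * l3 * U - u1 ^ 3 * u3 * L)
    (hb2 : b2 = l0 * l2 ^ 3 * U - u0 * u2 ^ 3 * L)
    (hb3 : b3 = l0 ^ 2 * l3 ^ 2 * U - u0 ^ 2 * u3 ^ 2 * L)
    (q : ℝ → ℝ → ℝ)
    (hq : ∀ x y, q x y = b0 * K0 x y + b1 * K1 x y + b2 * K2 x y + b3 * K3 x y)
    (w : ℝ → ℝ) (p : ℝ → ℝ × ℝ)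
    (hw : ∀ t, w t = u0 * (1 - t) ^ 3 + u1 * (t * (1 - t) ^ 2) + u2 * (t ^ 2 * (1 - t)) + u3 * t ^ 3)
    (hp : ∀ t, w t ≠ 0 → p t = (w t)⁻¹ •
      ((u0 * (1 - t) ^ 3) • c0 + (u1 * (t * (1 - t) ^ 2)) • c1 +
        (u2 * (t ^ 2 * (1 - t))) • c2 + (u3 * t ^ 3) • c3)) :
    ∀ t, w t ≠ 0 → q (p t).1 (p t).2 = 0 := by
  intro t hwt
  set a0 := u0 * (1 - t) ^ 3 with ha0
  set a1 := u1 * (t * (1 - t) ^ 2) with ha1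
  set a2 := u2 * (t ^ 2 * (1 - t)) with ha2
  set a3 := u3 * (t ^ 3) with ha3
  have hx : (p t).1 = (w t)⁻¹ * (a0 * c0.1 + a1 * c1.1 + a2 * c2.1 + a3 * c3.1) := by
    rw [hp t hwt]
    simp [Prod.fst_add, Prod.smul_fst, smul_eq_mul, ha0, ha1, ha2, ha3]
    try ring
  have hy : (p t).2 = (w t)⁻¹ * (a0 * c0.2 + a1 * c1.2 + a2 * c2.2 + a3 * c3.2) := by
    rw [hp t hwt]
    simp [Prod.snd_add, Prod.smul_snd, smul_eq_mul, ha0, ha1, ha2, ha3]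
    try ring
  have hwa : w t = a0 + a1 + a2 + a3 := by rw [hw]
  have e01 : lineL c0 c1 (p t).1 (p t).2 = (a2 * l3 - a3 * l2) / w t := by
    rw [eq_div_iff hwt]
    simp only [lineL, det3, lam, hx, hy, hl2, hl3]
    field_simp
    rw [hwa]; ring
  have e12 : lineL c1 c2 (p t).1 (p t).2 = (a0 * l3 - a3 * l0) / w t := by
    rw [eq_div_iff hwt]
    simp only [lineL, det3, lam, hx, hy, hl0, hl3]
    field_simp
    rw [hwa]; ring
  have e23 : lineL c2 c3 (p t).1 (p t).2 = (a0 * l1 - a1 * l0) / w t := by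
    rw [eq_div_iff hwt]
    simp only [lineL, det3, lam, hx, hy, hl0, hl1]
    field_simp
    rw [hwa]; ring
  have e13 : lineL c1 c3 (p t).1 (p t).2 = (a2 * l0 - a0 * l2) / w t := by
    rw [eq_div_iff hwt]
    simp only [lineL, det3, lam, hx, hy, hl0, hl2]
    field_simp
    rw [hwa]; ring
  have e02 : lineL c0 c2 (p t).1 (p t).2 = (a3 * l1 - a1 * l3) / w t := by
    rw [eq_div_iff hwt]
    simp only [lineL, det3, lam, hx, hy, hl1, hl3]
    field_simp
    rw [hwa]; ring
  have e03 : lineL c0 c3 (p t).1 (p t).2 = (a1 * l2 - a2 * l1) / w t := by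
    rw [eq_div_iff hwt]
    simp only [lineL, det3, lam, hx, hy, hl1, hl2]
    field_simp
    rw [hwa]; ring
  rw [hq, hK0, hK1, hK2, hK3, e01, e12, e23, e13, e02, e03]
  rw [hb0, hb1, hb2, hb3, hU, hL, ha0, ha1, ha2, ha3]
  field_simp
  ring
end
end

section
/- Let A be a 2×2 real matrix and v ∈ ℝ². If b̃0, b̃1, b̃2, b̃3 are the implicit coefficients computed from the transformed control points A·ci + v (i = 0,1,2,3) with the same weights, then b̃i = (det A)⁴ · bi for each i = 0,1,2,3. In particular, the coefficients (bi) are invariant under affine transformations up to a common constant scaling. -/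
noncomputable section

/-- the implicit coefficients computed from affinely transformed control
points equal `(det A)⁴` times the original coefficients. -/
theorem bezier_coeffs_affine_invariant (c0 c1 c2 c3 : ℝ × ℝ) (w0 w1 w2 w3 : ℝ)
    (A : Matrix (Fin 2) (Fin 2) ℝ) (v : ℝ × ℝ) (T : ℝ × ℝ → ℝ × ℝ)
    (hT : ∀ c : ℝ × ℝ, T c = (A 0 0 * c.1 + A 0 1 * c.2 + v.1, A 1 0 * c.1 + A 1 1 * c.2 + v.2))
    (u0 u1 u2 u3 : ℝ)
    (hu0 : u0 = w0) (hu1 : u1 = 3 * w1) (hu2 : u2 = 3 * w2) (hu3 : u3 = w3)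
    (l0 l1 l2 l3 : ℝ)
    (hl0 : l0 = lam c3 c2 c1) (hl1 : l1 = lam c2 c3 c0)
    (hl2 : l2 = lam c1 c0 c3) (hl3 : l3 = lam c0 c1 c2)
    (m0 m1 m2 m3 : ℝ)
    (hm0 : m0 = lam (T c3) (T c2) (T c1)) (hm1 : m1 = lam (T c2) (T c3) (T c0))
    (hm2 : m2 = lam (T c1) (T c0) (T c3)) (hm3 : m3 = lam (T c0) (T c1) (T c2))
    (U L M : ℝ)
    (hU : U = u0 * u1 * u2 * u3) (hL : L = l0 * l1 * l2 * l3) (hM : M = m0 * m1 * m2 * m3)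
    (b0 b1 b2 b3 : ℝ)
    (hb0 : b0 = -(l1 ^ 2 * l2 ^ 2 * U - u1 ^ 2 * u2 ^ 2 * L))
    (hb1 : b1 = l1 ^ 3 * l3 * U - u1 ^ 3 * u3 * L)
    (hb2 : b2 = l0 * l2 ^ 3 * U - u0 * u2 ^ 3 * L)
    (hb3 : b3 = l0 ^ 2 * l3 ^ 2 * U - u0 ^ 2 * u3 ^ 2 * L)
    (tb0 tb1 tb2 tb3 : ℝ)
    (htb0 : tb0 = -(m1 ^ 2 * m2 ^ 2 * U - u1 ^ 2 * u2 ^ 2 * M))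
    (htb1 : tb1 = m1 ^ 3 * m3 * U - u1 ^ 3 * u3 * M)
    (htb2 : tb2 = m0 * m2 ^ 3 * U - u0 * u2 ^ 3 * M)
    (htb3 : tb3 = m0 ^ 2 * m3 ^ 2 * U - u0 ^ 2 * u3 ^ 2 * M) :
    tb0 = A.det ^ 4 * b0 ∧ tb1 = A.det ^ 4 * b1 ∧ tb2 = A.det ^ 4 * b2 ∧ tb3 = A.det ^ 4 * b3 := by

  have key : ∀ p q r : ℝ × ℝ, lam (T p) (T q) (T r) = A.det * lam p q r := by
    intro p q r
    simp only [hT, lam, det3, Matrix.det_fin_two]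
    ring
  have hm0' : m0 = A.det * l0 := by rw [hm0, key, hl0]
  have hm1' : m1 = A.det * l1 := by rw [hm1, key, hl1]
  have hm2' : m2 = A.det * l2 := by rw [hm2, key, hl2]
  have hm3' : m3 = A.det * l3 := by rw [hm3, key, hl3]
  subst htb0 htb1 htb2 htb3 hb0 hb1 hb2 hb3 hM hL
  subst hm0' hm1' hm2' hm3'
  refine ⟨by ring, by ring, by ring, by ring⟩
end
end

section
/- For any control points c0, c1, c2, c3 ∈ ℝ² and any weights w0, w1, w2, w3 ∈ ℝ, the following two identities hold: u3·λ2·φ1 + u1·λ0·φ2 + u2·λ1·φ3 = 0, and u2·λ3·φ1 + u0·λ1·φ2 + u1·λ2·φ3 = 0. -/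
noncomputable section

/-- the two linear relations between φ₁, φ₂, φ₃. -/
theorem phi_relations (c0 c1 c2 c3 : ℝ × ℝ) (w0 w1 w2 w3 : ℝ)
    (u0 u1 u2 u3 : ℝ)
    (hu0 : u0 = w0) (hu1 : u1 = 3 * w1) (hu2 : u2 = 3 * w2) (hu3 : u3 = w3)
    (l0 l1 l2 l3 : ℝ)
    (hl0 : l0 = lam c3 c2 c1) (hl1 : l1 = lam c2 c3 c0)
    (hl2 : l2 = lam c1 c0 c3) (hl3 : l3 = lam c0 c1 c2)
    (phi1 phi2 phi3 : ℝ)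
    (hphi1 : phi1 = u0 * u2 * l1 ^ 2 - u1 ^ 2 * l0 * l2)
    (hphi2 : phi2 = u1 * u3 * l2 ^ 2 - u2 ^ 2 * l1 * l3)
    (hphi3 : phi3 = u1 * u2 * l0 * l3 - u0 * u3 * l1 * l2) :
    u3 * l2 * phi1 + u1 * l0 * phi2 + u2 * l1 * phi3 = 0 ∧
      u2 * l3 * phi1 + u0 * l1 * phi2 + u1 * l2 * phi3 = 0 := by
  subst hphi1 hphi2 hphi3
  constructor <;> ring
end
end

section
/- Assume no three of the control points are collinear (λi ≠ 0 for i = 0,1,2,3). Then the gradient of q at the endpoint c0 satisfies ∇q(c0) = −Λ·u1²·φ2 · (c_{0,1} − c_{1,1}, c_{1,0} − c_{0,0}). Consequently, ∇q(c0) = (0,0) if and only if φ2 = 0 or u1 = 0; and symmetrically, ∇q(c3) = (0,0) if and only if φ1 = 0 or u2 = 0. -/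
noncomputable section

lemma lineL_hasDerivAt_x (p r : ℝ × ℝ) (y x : ℝ) :
    HasDerivAt (fun s => lineL p r s y) (p.2 - r.2) x := by
  have h : (fun s => lineL p r s y) =
      fun s => (p.2 - r.2) * s + (-(y * (p.1 - r.1)) + (p.1 * r.2 - p.2 * r.1)) := by
    funext s; simp only [lineL, det3]; ring
  rw [h]
  simpa using ((hasDerivAt_id x).const_mul (p.2 - r.2)).add_const (-(y * (p.1 - r.1)) + (p.1 * r.2 - p.2 * r.1))

lemma lineL_hasDerivAt_y (p r : ℝ × ℝ) (x y : ℝ) :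
    HasDerivAt (fun s => lineL p r x s) (r.1 - p.1) y := by
  have h : (fun s => lineL p r x s) =
      fun s => (r.1 - p.1) * s + (x * (p.2 - r.2) + (p.1 * r.2 - p.2 * r.1)) := by
    funext s; simp only [lineL, det3]; ring
  rw [h]
  simpa using ((hasDerivAt_id y).const_mul (r.1 - p.1)).add_const (x * (p.2 - r.2) + (p.1 * r.2 - p.2 * r.1))

/-- formula for the gradient of `q` at the endpoint `c0`, and the
characterization of endpoint singularities. -/
theorem gradient_at_endpoints (c0 c1 c2 c3 : ℝ × ℝ) (w0 w1 w2 w3 : ℝ)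
    (u0 u1 u2 u3 : ℝ)
    (hu0 : u0 = w0) (hu1 : u1 = 3 * w1) (hu2 : u2 = 3 * w2) (hu3 : u3 = w3)
    (l0 l1 l2 l3 : ℝ)
    (hl0 : l0 = lam c3 c2 c1) (hl1 : l1 = lam c2 c3 c0)
    (hl2 : l2 = lam c1 c0 c3) (hl3 : l3 = lam c0 c1 c2)
    (hnc0 : l0 ≠ 0) (hnc1 : l1 ≠ 0) (hnc2 : l2 ≠ 0) (hnc3 : l3 ≠ 0)
    (K0 K1 K2 K3 : ℝ → ℝ → ℝ)
    (hK0 : ∀ x y, K0 x y = lineL c0 c1 x y * lineL c1 c2 x y * lineL c2 c3 x y)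
    (hK1 : ∀ x y, K1 x y = lineL c0 c1 x y * (lineL c1 c3 x y) ^ 2)
    (hK2 : ∀ x y, K2 x y = (lineL c0 c2 x y) ^ 2 * lineL c2 c3 x y)
    (hK3 : ∀ x y, K3 x y = (lineL c0 c3 x y) ^ 3)
    (U L b0 b1 b2 b3 : ℝ)
    (hU : U = u0 * u1 * u2 * u3) (hL : L = l0 * l1 * l2 * l3)
    (hb0 : b0 = -(l1 ^ 2 * l2 ^ 2 * U - u1 ^ 2 * u2 ^ 2 * L))
    (hb1 : b1 = l1 ^ 3 * l3 * U - u1 ^ 3 * u3 * L)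
    (hb2 : b2 = l0 * l2 ^ 3 * U - u0 * u2 ^ 3 * L)
    (hb3 : b3 = l0 ^ 2 * l3 ^ 2 * U - u0 ^ 2 * u3 ^ 2 * L)
    (q : ℝ → ℝ → ℝ)
    (hq : ∀ x y, q x y = b0 * K0 x y + b1 * K1 x y + b2 * K2 x y + b3 * K3 x y)
    (phi1 phi2 phi3 : ℝ)
    (hphi1 : phi1 = u0 * u2 * l1 ^ 2 - u1 ^ 2 * l0 * l2)
    (hphi2 : phi2 = u1 * u3 * l2 ^ 2 - u2 ^ 2 * l1 * l3)
    (hphi3 : phi3 = u1 * u2 * l0 * l3 - u0 * u3 * l1 * l2) :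
    grad q c0.1 c0.2 = (-(L * u1 ^ 2 * phi2)) • ((c0.2 - c1.2, c1.1 - c0.1) : ℝ × ℝ) ∧
      (grad q c0.1 c0.2 = (0 : ℝ × ℝ) ↔ phi2 = 0 ∨ u1 = 0) ∧
      (grad q c3.1 c3.2 = (0 : ℝ × ℝ) ↔ phi1 = 0 ∨ u2 = 0) := by
  -- partial derivative in x
  have keyx : ∀ x y : ℝ, deriv (fun s => q s y) x =
      b0 * ((((c0.2 - c1.2) * lineL c1 c2 x y + lineL c0 c1 x y * (c1.2 - c2.2)) *
          lineL c2 c3 x y + lineL c0 c1 x y * lineL c1 c2 x y * (c2.2 - c3.2))) +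
      b1 * ((c0.2 - c1.2) * lineL c1 c3 x y ^ 2 +
          lineL c0 c1 x y * (2 * lineL c1 c3 x y * (c1.2 - c3.2))) +
      b2 * ((2 * lineL c0 c2 x y * (c0.2 - c2.2)) * lineL c2 c3 x y +
          lineL c0 c2 x y ^ 2 * (c2.2 - c3.2)) +
      b3 * (3 * lineL c0 c3 x y ^ 2 * (c0.2 - c3.2)) := by
    intro x y
    have hfun : (fun s => q s y) = fun s =>
        b0 * (lineL c0 c1 s y * lineL c1 c2 s y * lineL c2 c3 s y) +
        b1 * (lineL c0 c1 s y * lineL c1 c3 s y ^ 2) +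
        b2 * (lineL c0 c2 s y ^ 2 * lineL c2 c3 s y) +
        b3 * lineL c0 c3 s y ^ 3 := by
      funext s; rw [hq, hK0, hK1, hK2, hK3]
    have h01 := lineL_hasDerivAt_x c0 c1 y x
    have h12 := lineL_hasDerivAt_x c1 c2 y x
    have h23 := lineL_hasDerivAt_x c2 c3 y x
    have h13 := lineL_hasDerivAt_x c1 c3 y x
    have h02 := lineL_hasDerivAt_x c0 c2 y x
    have h03 := lineL_hasDerivAt_x c0 c3 y x
    have H := (((((h01.mul h12).mul h23).const_mul b0).add
        ((h01.mul (h13.pow (n := 2))).const_mul b1)).add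
        (((h02.pow (n := 2)).mul h23).const_mul b2)).add
        ((h03.pow (n := 3)).const_mul b3)
    rw [hfun]; refine H.deriv.trans ?_; simp only [Pi.mul_apply, Pi.pow_apply]
    push_cast
    ring
  have keyy : ∀ x y : ℝ, deriv (fun s => q x s) y =
      b0 * ((((c1.1 - c0.1) * lineL c1 c2 x y + lineL c0 c1 x y * (c2.1 - c1.1)) *
          lineL c2 c3 x y + lineL c0 c1 x y * lineL c1 c2 x y * (c3.1 - c2.1))) +
      b1 * ((c1.1 - c0.1) * lineL c1 c3 x y ^ 2 +
          lineL c0 c1 x y * (2 * lineL c1 c3 x y * (c3.1 - c1.1))) +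
      b2 * ((2 * lineL c0 c2 x y * (c2.1 - c0.1)) * lineL c2 c3 x y +
          lineL c0 c2 x y ^ 2 * (c3.1 - c2.1)) +
      b3 * (3 * lineL c0 c3 x y ^ 2 * (c3.1 - c0.1)) := by
    intro x y
    have hfun : (fun s => q x s) = fun s =>
        b0 * (lineL c0 c1 x s * lineL c1 c2 x s * lineL c2 c3 x s) +
        b1 * (lineL c0 c1 x s * lineL c1 c3 x s ^ 2) +
        b2 * (lineL c0 c2 x s ^ 2 * lineL c2 c3 x s) +
        b3 * lineL c0 c3 x s ^ 3 := by
      funext s; rw [hq, hK0, hK1, hK2, hK3]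
    have h01 := lineL_hasDerivAt_y c0 c1 x y
    have h12 := lineL_hasDerivAt_y c1 c2 x y
    have h23 := lineL_hasDerivAt_y c2 c3 x y
    have h13 := lineL_hasDerivAt_y c1 c3 x y
    have h02 := lineL_hasDerivAt_y c0 c2 x y
    have h03 := lineL_hasDerivAt_y c0 c3 x y
    have H := (((((h01.mul h12).mul h23).const_mul b0).add
        ((h01.mul (h13.pow (n := 2))).const_mul b1)).add
        (((h02.pow (n := 2)).mul h23).const_mul b2)).add
        ((h03.pow (n := 3)).const_mul b3)
    rw [hfun]; refine H.deriv.trans ?_; simp only [Pi.mul_apply, Pi.pow_apply]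
    push_cast
    ring
  -- values of the line forms at c0
  have e01 : lineL c0 c1 c0.1 c0.2 = 0 := by simp only [lineL, det3]; ring
  have e02 : lineL c0 c2 c0.1 c0.2 = 0 := by simp only [lineL, det3]; ring
  have e03 : lineL c0 c3 c0.1 c0.2 = 0 := by simp only [lineL, det3]; ring
  have e12 : lineL c1 c2 c0.1 c0.2 = l3 := by rw [hl3]; simp only [lineL, lam, det3]; try ring
  have e23 : lineL c2 c3 c0.1 c0.2 = l1 := by rw [hl1]; simp only [lineL, lam, det3]; try ring
  have e13 : lineL c1 c3 c0.1 c0.2 = -l2 := by rw [hl2]; simp only [lineL, lam, det3]; try ring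
  -- values of the line forms at c3
  have f03 : lineL c0 c3 c3.1 c3.2 = 0 := by simp only [lineL, det3]; ring
  have f13 : lineL c1 c3 c3.1 c3.2 = 0 := by simp only [lineL, det3]; ring
  have f23 : lineL c2 c3 c3.1 c3.2 = 0 := by simp only [lineL, det3]; ring
  have f01 : lineL c0 c1 c3.1 c3.2 = -l2 := by rw [hl2]; simp only [lineL, lam, det3]; try ring
  have f12 : lineL c1 c2 c3.1 c3.2 = -l0 := by rw [hl0]; simp only [lineL, lam, det3]; try ring
  have f02 : lineL c0 c2 c3.1 c3.2 = l1 := by rw [hl1]; simp only [lineL, lam, det3]; try ring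
  have g0 : grad q c0.1 c0.2 =
      (-(L * u1 ^ 2 * phi2) * (c0.2 - c1.2), -(L * u1 ^ 2 * phi2) * (c1.1 - c0.1)) := by
    rw [grad, keyx, keyy, e01, e02, e03, e12, e23, e13, Prod.mk.injEq]
    constructor
    · rw [hb0, hb1, hphi2]; ring
    · rw [hb0, hb1, hphi2]; ring
  have g3 : grad q c3.1 c3.2 =
      (-(L * u2 ^ 2 * phi1) * (c2.2 - c3.2), -(L * u2 ^ 2 * phi1) * (c3.1 - c2.1)) := by
    rw [grad, keyx, keyy, f01, f02, f03, f12, f23, f13, Prod.mk.injEq]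
    constructor
    · rw [hb0, hb2, hphi1]; ring
    · rw [hb0, hb2, hphi1]; ring
  have hLne : L ≠ 0 := by
    rw [hL]; exact mul_ne_zero (mul_ne_zero (mul_ne_zero hnc0 hnc1) hnc2) hnc3
  -- the direction vectors are nonzero
  have hv0 : c0.2 - c1.2 ≠ 0 ∨ c1.1 - c0.1 ≠ 0 := by
    by_contra hc
    push_neg at hc
    obtain ⟨ha, hb⟩ := hc
    apply hnc2
    have h1 : c0.2 = c1.2 := by linarith
    have h2 : c0.1 = c1.1 := by linarith
    rw [hl2, lam, det3, h1, h2]; ring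
  have hv3 : c2.2 - c3.2 ≠ 0 ∨ c3.1 - c2.1 ≠ 0 := by
    by_contra hc
    push_neg at hc
    obtain ⟨ha, hb⟩ := hc
    apply hnc0
    have h1 : c2.2 = c3.2 := by linarith
    have h2 : c2.1 = c3.1 := by linarith
    rw [hl0, lam, det3, h1, h2]; ring
  refine ⟨?_, ?_, ?_⟩
  · rw [g0]; simp [Prod.smul_mk, smul_eq_mul]
  · rw [g0]
    constructor
    · intro h
      rw [Prod.mk.injEq] at h
      obtain ⟨h1, h2⟩ := h
      simp only [Prod.fst_zero, Prod.snd_zero] at h1 h2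
      have hk : -(L * u1 ^ 2 * phi2) = 0 := by
        rcases hv0 with hv | hv
        · exact (mul_eq_zero.mp h1).resolve_right hv
        · exact (mul_eq_zero.mp h2).resolve_right hv
      have hk' : L * u1 ^ 2 * phi2 = 0 := by linarith
      rcases mul_eq_zero.mp hk' with h | h
      · rcases mul_eq_zero.mp h with h | h
        · exact absurd h hLne
        · exact Or.inr (pow_eq_zero_iff two_ne_zero |>.mp h)
      · exact Or.inl h
    · rintro (h | h) <;> simp [h]
  · rw [g3]
    constructor
    · intro h
      rw [Prod.mk.injEq] at h
      obtain ⟨h1, h2⟩ := h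
      simp only [Prod.fst_zero, Prod.snd_zero] at h1 h2
      have hk : -(L * u2 ^ 2 * phi1) = 0 := by
        rcases hv3 with hv | hv
        · exact (mul_eq_zero.mp h1).resolve_right hv
        · exact (mul_eq_zero.mp h2).resolve_right hv
      have hk' : L * u2 ^ 2 * phi1 = 0 := by linarith
      rcases mul_eq_zero.mp hk' with h | h
      · rcases mul_eq_zero.mp h with h | h
        · exact absurd h hLne
        · exact Or.inr (pow_eq_zero_iff two_ne_zero |>.mp h)
      · exact Or.inl h
    · rintro (h | h) <;> simp [h]
end
end

section
/- For every t ∈ ℝ with w(t) ≠ 0, one has w(t)·S̃1(p(t)) = λ1·t·r(t). Consequently, if λ1 ≠ 0, then for every t ≠ 0 with w(t) ≠ 0: S̃1(p(t)) = 0 if and only if r(t) = 0; i.e., the parameter values of the double point of the curve are the solutions of the quadratic equation r(t) = 0. -/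
noncomputable section

/-- `w(t)·S̃₁(p(t)) = λ₁·t·r(t)`, hence for `λ₁ ≠ 0` and `t ≠ 0` the
double-point parameters are exactly the roots of the quadratic `r`. -/
theorem singular_line_parametric_identity (c0 c1 c2 c3 : ℝ × ℝ) (w0 w1 w2 w3 : ℝ)
    (u0 u1 u2 u3 : ℝ)
    (hu0 : u0 = w0) (hu1 : u1 = 3 * w1) (hu2 : u2 = 3 * w2) (hu3 : u3 = w3)
    (l0 l1 l2 l3 : ℝ)
    (hl0 : l0 = lam c3 c2 c1) (hl1 : l1 = lam c2 c3 c0)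
    (hl2 : l2 = lam c1 c0 c3) (hl3 : l3 = lam c0 c1 c2)
    (phi1 phi2 phi3 : ℝ)
    (hphi1 : phi1 = u0 * u2 * l1 ^ 2 - u1 ^ 2 * l0 * l2)
    (hphi2 : phi2 = u1 * u3 * l2 ^ 2 - u2 ^ 2 * l1 * l3)
    (hphi3 : phi3 = u1 * u2 * l0 * l3 - u0 * u3 * l1 * l2)
    (P1 P2 P3 : ℝ)
    (hP1 : P1 = phi1 * u2 * u3) (hP2 : P2 = phi2 * u0 * u1) (hP3 : P3 = phi3 * u1 * u2)
    (r : ℝ → ℝ)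
    (hr : ∀ t, r t = P1 * t ^ 2 + P3 * (t * (1 - t)) + P2 * (1 - t) ^ 2)
    (S1 S2 : ℝ → ℝ → ℝ)
    (hS1 : ∀ x y, S1 x y = u2 * phi1 * lineL c0 c2 x y - u1 * phi3 * lineL c0 c3 x y)
    (hS2 : ∀ x y, S2 x y = u1 * phi2 * lineL c1 c3 x y - u2 * phi3 * lineL c0 c3 x y)
    (w : ℝ → ℝ) (p : ℝ → ℝ × ℝ)
    (hw : ∀ t, w t = u0 * (1 - t) ^ 3 + u1 * (t * (1 - t) ^ 2) + u2 * (t ^ 2 * (1 - t)) + u3 * t ^ 3)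
    (hp : ∀ t, w t ≠ 0 → p t = (w t)⁻¹ •
      ((u0 * (1 - t) ^ 3) • c0 + (u1 * (t * (1 - t) ^ 2)) • c1 +
        (u2 * (t ^ 2 * (1 - t))) • c2 + (u3 * t ^ 3) • c3)) :
    (∀ t, w t ≠ 0 → w t * S1 (p t).1 (p t).2 = l1 * t * r t) ∧
      (l1 ≠ 0 → ∀ t, t ≠ 0 → w t ≠ 0 → (S1 (p t).1 (p t).2 = 0 ↔ r t = 0)) := by

  have key : ∀ t, w t ≠ 0 → w t * S1 (p t).1 (p t).2 = l1 * t * r t := by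
    intro t ht
    rw [hp t ht, hS1, hr]
    have hlin : ∀ (a b : ℝ × ℝ) (x y : ℝ), w t * lineL a b ((w t)⁻¹ * x) ((w t)⁻¹ * y) =
        x * (a.2 - b.2) - y * (a.1 - b.1) + w t * (a.1 * b.2 - a.2 * b.1) := by
      intro a b x y; simp only [lineL, det3]; field_simp
    simp only [Prod.smul_fst, Prod.smul_snd, smul_eq_mul]
    rw [mul_sub, mul_left_comm (w t) (u2 * phi1), hlin, mul_left_comm (w t) (u1 * phi3), hlin]
    obtain ⟨a0, b0⟩ := c0; obtain ⟨a1, b1⟩ := c1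
    obtain ⟨a2, b2⟩ := c2; obtain ⟨a3, b3⟩ := c3
    simp only [lineL, det3, lam, Prod.smul_mk, Prod.mk_add_mk, smul_eq_mul] at *
    subst hl0 hl1 hl2 hl3 hphi1 hphi2 hphi3 hP1 hP2 hP3
    rw [hw t] at ht ⊢
    ring
  refine ⟨key, fun hl1ne t ht hwt => ?_⟩
  have h := key t hwt
  have hne : l1 * t ≠ 0 := mul_ne_zero hl1ne ht
  constructor
  · intro h0
    have h2 : l1 * t * r t = 0 := by rw [← h, h0, mul_zero]
    exact (mul_eq_zero.1 h2).resolve_left hne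
  · intro h0
    have h2 : w t * S1 (p t).1 (p t).2 = 0 := by rw [h, h0, mul_zero]
    exact (mul_eq_zero.1 h2).resolve_left hwt
end
end

section
/- For any control points and weights, and for every t ∈ ℝ with w(t) ≠ 0, the identity w(t)²·q2(p(t)) = t²·(1−t)²·r(t) holds, where q2(x,y) = u0u3·L_{03}(x,y)² − u1u2·L_{01}(x,y)·L_{23}(x,y). -/
noncomputable section

set_option maxHeartbeats 1000000 in
/-- the identity `w(t)²·q₂(p(t)) = t²(1−t)²·r(t)`. -/
theorem q2_parametric_identity (c0 c1 c2 c3 : ℝ × ℝ) (w0 w1 w2 w3 : ℝ)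
    (u0 u1 u2 u3 : ℝ)
    (hu0 : u0 = w0) (hu1 : u1 = 3 * w1) (hu2 : u2 = 3 * w2) (hu3 : u3 = w3)
    (l0 l1 l2 l3 : ℝ)
    (hl0 : l0 = lam c3 c2 c1) (hl1 : l1 = lam c2 c3 c0)
    (hl2 : l2 = lam c1 c0 c3) (hl3 : l3 = lam c0 c1 c2)
    (phi1 phi2 phi3 : ℝ)
    (hphi1 : phi1 = u0 * u2 * l1 ^ 2 - u1 ^ 2 * l0 * l2)
    (hphi2 : phi2 = u1 * u3 * l2 ^ 2 - u2 ^ 2 * l1 * l3)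
    (hphi3 : phi3 = u1 * u2 * l0 * l3 - u0 * u3 * l1 * l2)
    (P1 P2 P3 : ℝ)
    (hP1 : P1 = phi1 * u2 * u3) (hP2 : P2 = phi2 * u0 * u1) (hP3 : P3 = phi3 * u1 * u2)
    (r : ℝ → ℝ)
    (hr : ∀ t, r t = P1 * t ^ 2 + P3 * (t * (1 - t)) + P2 * (1 - t) ^ 2)
    (q2 : ℝ → ℝ → ℝ)
    (hq2 : ∀ x y, q2 x y = u0 * u3 * (lineL c0 c3 x y) ^ 2 - u1 * u2 * (lineL c0 c1 x y * lineL c2 c3 x y))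
    (w : ℝ → ℝ) (p : ℝ → ℝ × ℝ)
    (hw : ∀ t, w t = u0 * (1 - t) ^ 3 + u1 * (t * (1 - t) ^ 2) + u2 * (t ^ 2 * (1 - t)) + u3 * t ^ 3)
    (hp : ∀ t, w t ≠ 0 → p t = (w t)⁻¹ •
      ((u0 * (1 - t) ^ 3) • c0 + (u1 * (t * (1 - t) ^ 2)) • c1 +
        (u2 * (t ^ 2 * (1 - t))) • c2 + (u3 * t ^ 3) • c3)) :
    ∀ t, w t ≠ 0 → (w t) ^ 2 * q2 (p t).1 (p t).2 = t ^ 2 * (1 - t) ^ 2 * r t := by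
  intro t ht
  -- linearity of the line forms along p(t)
  have key : ∀ a b : ℝ × ℝ, w t * lineL a b (p t).1 (p t).2 =
      u0 * (1 - t) ^ 3 * lineL a b c0.1 c0.2 + u1 * (t * (1 - t) ^ 2) * lineL a b c1.1 c1.2 +
      u2 * (t ^ 2 * (1 - t)) * lineL a b c2.1 c2.2 + u3 * t ^ 3 * lineL a b c3.1 c3.2 := by
    intro a b
    rw [hp t ht]
    simp only [lineL, det3, Prod.smul_fst, Prod.smul_snd, Prod.fst_add, Prod.snd_add,
      smul_eq_mul]
    rw [hw t] at ht ⊢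
    have hinv := mul_inv_cancel₀ ht
    linear_combination (((u0 * (1 - t) ^ 3) * c0.1 + (u1 * (t * (1 - t) ^ 2)) * c1.1 + (u2 * (t ^ 2 * (1 - t))) * c2.1 + (u3 * t ^ 3) * c3.1) * (a.2 - b.2) - ((u0 * (1 - t) ^ 3) * c0.2 + (u1 * (t * (1 - t) ^ 2)) * c1.2 + (u2 * (t ^ 2 * (1 - t))) * c2.2 + (u3 * t ^ 3) * c3.2) * (a.1 - b.1)) * hinv
  have e03 : w t * lineL c0 c3 (p t).1 (p t).2 =
      u1 * (t * (1 - t) ^ 2) * l2 - u2 * (t ^ 2 * (1 - t)) * l1 := by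
    rw [key]; subst hl1 hl2; simp only [lineL, lam, det3]; ring
  have e01 : w t * lineL c0 c1 (p t).1 (p t).2 =
      u2 * (t ^ 2 * (1 - t)) * l3 - u3 * t ^ 3 * l2 := by
    rw [key]; subst hl2 hl3; simp only [lineL, lam, det3]; ring
  have e23 : w t * lineL c2 c3 (p t).1 (p t).2 =
      u0 * (1 - t) ^ 3 * l1 - u1 * (t * (1 - t) ^ 2) * l0 := by
    rw [key]; subst hl0 hl1; simp only [lineL, lam, det3]; ring
  have main : (w t) ^ 2 * q2 (p t).1 (p t).2 =
      u0 * u3 * (w t * lineL c0 c3 (p t).1 (p t).2) ^ 2 -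
      u1 * u2 * ((w t * lineL c0 c1 (p t).1 (p t).2) * (w t * lineL c2 c3 (p t).1 (p t).2)) := by
    rw [hq2]; ring
  rw [main, e03, e01, e23, hr, hP1, hP2, hP3, hphi1, hphi2, hphi3]
  ring
end
end

section
/- Suppose all weights are nonzero (wi ≠ 0 for i = 0,1,2,3) and no three of the control points are collinear (λi ≠ 0 for i = 0,1,2,3). Then the rational cubic Bézier curve degenerates to a conic if and only if φ1 = 0 and φ2 = 0. -/
noncomputable section

private lemma fne {m1 m2 : Fin 2 →₀ ℕ} (j : Fin 2) (h : m1 j ≠ m2 j) : m1 ≠ m2 :=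
  fun he => h (by rw [he])

private lemma six_mono {m : Fin 2 →₀ ℕ} (hm : m 0 + m 1 ≤ 2) :
    m = 0 ∨ m = Finsupp.single 0 1 ∨ m = Finsupp.single 1 1 ∨ m = Finsupp.single 0 2 ∨
      m = Finsupp.single 0 1 + Finsupp.single 1 1 ∨ m = Finsupp.single 1 2 := by
  have hrep' : m = Finsupp.single 0 (m 0) + Finsupp.single 1 (m 1) := by
    apply DFunLike.ext
    intro i
    fin_cases i <;> simp [Finsupp.single_apply]
  have hm0 : m 0 = 0 ∨ m 0 = 1 ∨ m 0 = 2 := by omega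
  have hm1 : m 1 = 0 ∨ m 1 = 1 ∨ m 1 = 2 := by omega
  rcases hm0 with h0|h0|h0 <;> rcases hm1 with h1|h1|h1 <;>
    rw [h0, h1] at hrep' <;>
    (try simp only [Finsupp.single_zero, add_zero, zero_add] at hrep') <;>
    first
      | omega
      | tauto

private lemma quad_coeffs (F : MvPolynomial (Fin 2) ℝ) (hdeg : F.totalDegree ≤ 2) :
    ∃ a b c d e f : ℝ, ∀ x y : ℝ,
      MvPolynomial.eval ![x, y] F =
        f + d * x + e * y + a * x ^ 2 + b * (x * y) + c * y ^ 2 := by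
  classical
  refine ⟨F.coeff (Finsupp.single 0 2), F.coeff (Finsupp.single 0 1 + Finsupp.single 1 1),
    F.coeff (Finsupp.single 1 2), F.coeff (Finsupp.single 0 1), F.coeff (Finsupp.single 1 1),
    F.coeff 0, ?_⟩
  intro x y
  rw [MvPolynomial.eval_eq']
  have hsub : F.support ⊆ ({0, Finsupp.single 0 1, Finsupp.single 1 1, Finsupp.single 0 2,
      Finsupp.single 0 1 + Finsupp.single 1 1, Finsupp.single 1 2} : Finset (Fin 2 →₀ ℕ)) := by
    intro m hm
    have h1 : (m.sum fun _ e => e) ≤ 2 := le_trans (MvPolynomial.le_totalDegree hm) hdeg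
    have h2 : m 0 + m 1 ≤ 2 := by
      have hs : (m.sum fun _ e => e) = m 0 + m 1 := by
        rw [Finsupp.sum_fintype _ _ (fun _ => rfl), Fin.sum_univ_two]
      omega
    have h3 := six_mono h2
    simp only [Finset.mem_insert, Finset.mem_singleton]
    tauto
  rw [Finset.sum_subset hsub (fun m _ hm =>
    by rw [MvPolynomial.notMem_support_iff.mp hm, zero_mul])]
  have d01 : (0 : Fin 2 →₀ ℕ) ≠ Finsupp.single 0 1 := fne 0 (by simp)
  have d02 : (0 : Fin 2 →₀ ℕ) ≠ Finsupp.single 1 1 := fne 1 (by simp)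
  have d03 : (0 : Fin 2 →₀ ℕ) ≠ Finsupp.single 0 2 := fne 0 (by simp)
  have d04 : (0 : Fin 2 →₀ ℕ) ≠ Finsupp.single 0 1 + Finsupp.single 1 1 := fne 0 (by simp)
  have d05 : (0 : Fin 2 →₀ ℕ) ≠ Finsupp.single 1 2 := fne 1 (by simp)
  have d12 : (Finsupp.single 0 1 : Fin 2 →₀ ℕ) ≠ Finsupp.single 1 1 := fne 0 (by simp)
  have d13 : (Finsupp.single 0 1 : Fin 2 →₀ ℕ) ≠ Finsupp.single 0 2 := fne 0 (by simp)
  have d14 : (Finsupp.single 0 1 : Fin 2 →₀ ℕ) ≠ Finsupp.single 0 1 + Finsupp.single 1 1 :=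
    fne 1 (by simp)
  have d15 : (Finsupp.single 0 1 : Fin 2 →₀ ℕ) ≠ Finsupp.single 1 2 := fne 0 (by simp)
  have d23 : (Finsupp.single 1 1 : Fin 2 →₀ ℕ) ≠ Finsupp.single 0 2 := fne 1 (by simp)
  have d24 : (Finsupp.single 1 1 : Fin 2 →₀ ℕ) ≠ Finsupp.single 0 1 + Finsupp.single 1 1 :=
    fne 0 (by simp)
  have d25 : (Finsupp.single 1 1 : Fin 2 →₀ ℕ) ≠ Finsupp.single 1 2 := fne 1 (by simp)
  have d34 : (Finsupp.single 0 2 : Fin 2 →₀ ℕ) ≠ Finsupp.single 0 1 + Finsupp.single 1 1 :=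
    fne 0 (by simp)
  have d35 : (Finsupp.single 0 2 : Fin 2 →₀ ℕ) ≠ Finsupp.single 1 2 := fne 0 (by simp)
  have d45 : (Finsupp.single 0 1 + Finsupp.single 1 1 : Fin 2 →₀ ℕ) ≠ Finsupp.single 1 2 :=
    fne 0 (by simp)
  rw [Finset.sum_insert (by simp [d01, d02, d03, d04, d05]),
      Finset.sum_insert (by simp [d12, d13, d14, d15]),
      Finset.sum_insert (by simp [d23, d24, d25]),
      Finset.sum_insert (by simp [d34, d35]),
      Finset.sum_insert (by simp [d45]),
      Finset.sum_singleton]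
  simp only [Fin.prod_univ_two, Finsupp.coe_zero, Pi.zero_apply, Finsupp.single_eq_same,
    Finsupp.add_apply, Finsupp.single_apply, Matrix.cons_val_zero, Matrix.cons_val_one,
    Matrix.head_cons]
  norm_num
  ring

private lemma poly_zero_everywhere {g : Polynomial ℝ} {S : Set ℝ} (hS : S.Infinite)
    (h : ∀ t ∈ S, g.eval t = 0) (t : ℝ) : g.eval t = 0 := by
  have hg : g = 0 := g.eq_zero_of_infinite_isRoot (hS.mono fun x hx => h x hx)
  rw [hg]; simp

set_option maxHeartbeats 4000000 in
/-- the rational cubic Bézier curve degenerates to a conic iff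
`φ₁ = 0` and `φ₂ = 0`. -/
theorem degenerates_to_conic_iff (c0 c1 c2 c3 : ℝ × ℝ) (w0 w1 w2 w3 : ℝ)
    (hw0 : w0 ≠ 0) (hw1 : w1 ≠ 0) (hw2 : w2 ≠ 0) (hw3 : w3 ≠ 0)
    (u0 u1 u2 u3 : ℝ)
    (hu0 : u0 = w0) (hu1 : u1 = 3 * w1) (hu2 : u2 = 3 * w2) (hu3 : u3 = w3)
    (l0 l1 l2 l3 : ℝ)
    (hl0 : l0 = lam c3 c2 c1) (hl1 : l1 = lam c2 c3 c0)
    (hl2 : l2 = lam c1 c0 c3) (hl3 : l3 = lam c0 c1 c2)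
    (hnc0 : l0 ≠ 0) (hnc1 : l1 ≠ 0) (hnc2 : l2 ≠ 0) (hnc3 : l3 ≠ 0)
    (phi1 phi2 phi3 : ℝ)
    (hphi1 : phi1 = u0 * u2 * l1 ^ 2 - u1 ^ 2 * l0 * l2)
    (hphi2 : phi2 = u1 * u3 * l2 ^ 2 - u2 ^ 2 * l1 * l3)
    (hphi3 : phi3 = u1 * u2 * l0 * l3 - u0 * u3 * l1 * l2)
    (w : ℝ → ℝ) (p : ℝ → ℝ × ℝ)
    (hw : ∀ t, w t = u0 * (1 - t) ^ 3 + u1 * (t * (1 - t) ^ 2) + u2 * (t ^ 2 * (1 - t)) + u3 * t ^ 3)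
    (hp : ∀ t, w t ≠ 0 → p t = (w t)⁻¹ •
      ((u0 * (1 - t) ^ 3) • c0 + (u1 * (t * (1 - t) ^ 2)) • c1 +
        (u2 * (t ^ 2 * (1 - t))) • c2 + (u3 * t ^ 3) • c3)) :
    (∃ F : MvPolynomial (Fin 2) ℝ, F ≠ 0 ∧ F.totalDegree ≤ 2 ∧
        ∀ t, w t ≠ 0 → MvPolynomial.eval ![(p t).1, (p t).2] F = 0) ↔
      (phi1 = 0 ∧ phi2 = 0) := by
  have hu0n : u0 ≠ 0 := by rw [hu0]; exact hw0
  have hu1n : u1 ≠ 0 := by rw [hu1]; exact mul_ne_zero three_ne_zero hw1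
  have hu2n : u2 ≠ 0 := by rw [hu2]; exact mul_ne_zero three_ne_zero hw2
  have hu3n : u3 ≠ 0 := by rw [hu3]; exact hw3
  have Hl0 : l0 = c3.1*(c2.2-c1.2) - c3.2*(c2.1-c1.1) + (c2.1*c1.2 - c2.2*c1.1) := by
    rw [hl0]; rfl
  have Hl1 : l1 = c2.1*(c3.2-c0.2) - c2.2*(c3.1-c0.1) + (c3.1*c0.2 - c3.2*c0.1) := by
    rw [hl1]; rfl
  have Hl2 : l2 = c1.1*(c0.2-c3.2) - c1.2*(c0.1-c3.1) + (c0.1*c3.2 - c0.2*c3.1) := by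
    rw [hl2]; rfl
  have Hl3 : l3 = c0.1*(c1.2-c2.2) - c0.2*(c1.1-c2.1) + (c1.1*c2.2 - c1.2*c2.1) := by
    rw [hl3]; rfl
  have hx : ∀ t, w t ≠ 0 → w t * (p t).1 = (u0*(1-t)^3*c0.1 + u1*(t*(1-t)^2)*c1.1 + u2*(t^2*(1-t))*c2.1 + u3*t^3*c3.1) := by
    intro t ht
    rw [hp t ht]
    simp only [Prod.smul_fst, Prod.fst_add, smul_eq_mul]
    rw [mul_inv_cancel_left₀ ht]
  have hy : ∀ t, w t ≠ 0 → w t * (p t).2 = (u0*(1-t)^3*c0.2 + u1*(t*(1-t)^2)*c1.2 + u2*(t^2*(1-t))*c2.2 + u3*t^3*c3.2) := by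
    intro t ht
    rw [hp t ht]
    simp only [Prod.smul_snd, Prod.snd_add, smul_eq_mul]
    rw [mul_inv_cancel_left₀ ht]
  have hL0 : ∀ t, w t ≠ 0 → w t * ((c0.2-c3.2)*(p t).1 + (c3.1-c0.1)*(p t).2 + (c0.1*c3.2-c0.2*c3.1)) = (t*(1-t)*(u1*l2*(1-t) - u2*l1*t)) := by
    intro t ht
    linear_combination (c0.2-c3.2) * hx t ht + (c3.1-c0.1) * hy t ht
      + (c0.1*c3.2-c0.2*c3.1) * hw t - (t*(1-t)^2*u1) * Hl2 + (t^2*(1-t)*u2) * Hl1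
  have hL1 : ∀ t, w t ≠ 0 → w t * ((c0.2-c1.2)*(p t).1 + (c1.1-c0.1)*(p t).2 + (c0.1*c1.2-c0.2*c1.1)) = (t^2*(u2*l3*(1-t) - u3*l2*t)) := by
    intro t ht
    linear_combination (c0.2-c1.2) * hx t ht + (c1.1-c0.1) * hy t ht
      + (c0.1*c1.2-c0.2*c1.1) * hw t - (t^2*(1-t)*u2) * Hl3 + (t^3*u3) * Hl2
  have hL2 : ∀ t, w t ≠ 0 → w t * ((c3.2-c2.2)*(p t).1 + (c2.1-c3.1)*(p t).2 + (c3.1*c2.2-c3.2*c2.1)) = ((1-t)^2*(u1*l0*t - u0*l1*(1-t))) := by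
    intro t ht
    linear_combination (c3.2-c2.2) * hx t ht + (c2.1-c3.1) * hy t ht
      + (c3.1*c2.2-c3.2*c2.1) * hw t - ((1-t)^2*t*u1) * Hl0 + ((1-t)^3*u0) * Hl1
  constructor
  · -- forward direction
    rintro ⟨F, hF0, hFdeg, hFv⟩
    obtain ⟨a, b, c, d, e, f, hmono⟩ := quad_coeffs F hFdeg
    obtain ⟨al, be, ga, de, ep, ze, hdec⟩ :
        ∃ al be ga de ep ze : ℝ, ∀ x y : ℝ,
          (l1*l2*l2) * MvPolynomial.eval ![x, y] F =
            al * ((c0.2-c3.2)*x + (c3.1-c0.1)*y + (c0.1*c3.2-c0.2*c3.1))^2 + be * (((c0.2-c3.2)*x + (c3.1-c0.1)*y + (c0.1*c3.2-c0.2*c3.1))*((c0.2-c1.2)*x + (c1.1-c0.1)*y + (c0.1*c1.2-c0.2*c1.1)))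
              + ga * (((c0.2-c1.2)*x + (c1.1-c0.1)*y + (c0.1*c1.2-c0.2*c1.1))*((c3.2-c2.2)*x + (c2.1-c3.1)*y + (c3.1*c2.2-c3.2*c2.1))) + de * ((c0.2-c3.2)*x + (c3.1-c0.1)*y + (c0.1*c3.2-c0.2*c3.1))
              + ep * ((c0.2-c1.2)*x + (c1.1-c0.1)*y + (c0.1*c1.2-c0.2*c1.1)) + ze := by
      refine ⟨(l1*(a*(c1.1-c0.1)^2 - b*(c0.2-c1.2)*(c1.1-c0.1) + c*(c0.2-c1.2)^2)), (l1*(-2*a*(c3.1-c0.1)*(c1.1-c0.1) + b*((c0.2-c3.2)*(c1.1-c0.1)+(c0.2-c1.2)*(c3.1-c0.1)) - 2*c*(c0.2-c3.2)*(c0.2-c1.2)) - (a*(c3.1-c0.1)^2 - b*(c0.2-c3.2)*(c3.1-c0.1) + c*(c0.2-c3.2)^2)*(l2+l3)), (-(a*(c3.1-c0.1)^2 - b*(c0.2-c3.2)*(c3.1-c0.1) + c*(c0.2-c3.2)^2)*l2), (l1*l2*((d + 2*a*c0.1 + b*c0.2)*(c1.1-c0.1) - (e + b*c0.1 + 2*c*c0.2)*(c0.2-c1.2))),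 (l1*l2*(-(d + 2*a*c0.1 + b*c0.2)*(c3.1-c0.1) + (e + b*c0.1 + 2*c*c0.2)*(c0.2-c3.2)) - l1*l2*(a*(c3.1-c0.1)^2 - b*(c0.2-c3.2)*(c3.1-c0.1) + c*(c0.2-c3.2)^2)), (l1*l2*l2*(f + d*c0.1 + e*c0.2 + a*c0.1^2 + b*(c0.1*c0.2) + c*c0.2^2)), fun x y => ?_⟩
      rw [hmono x y, Hl1, Hl2, Hl3]
      ring
    have hwz0 : w 0 = u0 := by rw [hw]; ring
    have hwn0 : w 0 ≠ 0 := by rw [hwz0]; exact hu0n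
    have hwz1 : w 1 = u3 := by rw [hw]; ring
    have hwn1 : w 1 ≠ 0 := by rw [hwz1]; exact hu3n
    have hp0 : p 0 = c0 := by
      rw [hp 0 hwn0, hwz0]
      apply Prod.ext <;>
        simp only [Prod.smul_fst, Prod.smul_snd, Prod.fst_add, Prod.snd_add, smul_eq_mul] <;>
        · field_simp; ring
    have hp1 : p 1 = c3 := by
      rw [hp 1 hwn1, hwz1]
      apply Prod.ext <;>
        simp only [Prod.smul_fst, Prod.smul_snd, Prod.fst_add, Prod.snd_add, smul_eq_mul] <;>
        · field_simp; ring
    have h00 := hFv 0 hwn0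
    rw [hp0] at h00
    have hze : ze = 0 := by
      have hd := hdec c0.1 c0.2
      rw [h00, mul_zero] at hd
      linear_combination -hd
    subst hze
    have h11 := hFv 1 hwn1
    rw [hp1] at h11
    have hep : ep = 0 := by
      have hd := hdec c3.1 c3.2
      rw [h11, mul_zero] at hd
      have hml : ep * l2 = 0 := by
        rw [Hl2]; linear_combination hd
      exact (mul_eq_zero.mp hml).resolve_right hnc2
    subst hep
    have hG : ∀ t, w t ≠ 0 →
        al * (t*(1-t)*(u1*l2*(1-t) - u2*l1*t))^2 + be * ((t*(1-t)*(u1*l2*(1-t) - u2*l1*t))*(t^2*(u2*l3*(1-t) - u3*l2*t))) + ga * ((t^2*(u2*l3*(1-t) - u3*l2*t))*((1-t)^2*(u1*l0*t - u0*l1*(1-t))))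
          + de * ((t*(1-t)*(u1*l2*(1-t) - u2*l1*t))*(u0*(1-t)^3 + u1*(t*(1-t)^2) + u2*(t^2*(1-t)) + u3*t^3)) = 0 := by
      intro t ht
      have hd := hdec (p t).1 (p t).2
      rw [hFv t ht, mul_zero] at hd
      linear_combination (-(w t)^2) * hd
        - (al*(w t * ((c0.2-c3.2)*(p t).1 + (c3.1-c0.1)*(p t).2 + (c0.1*c3.2-c0.2*c3.1)) + (t*(1-t)*(u1*l2*(1-t) - u2*l1*t))) + be*(w t * ((c0.2-c1.2)*(p t).1 + (c1.1-c0.1)*(p t).2 + (c0.1*c1.2-c0.2*c1.1))) + de*(w t)) * hL0 t ht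
        - (be*(t*(1-t)*(u1*l2*(1-t) - u2*l1*t)) + ga*(w t * ((c3.2-c2.2)*(p t).1 + (c2.1-c3.1)*(p t).2 + (c3.1*c2.2-c3.2*c2.1)))) * hL1 t ht
        - (ga*(t^2*(u2*l3*(1-t) - u3*l2*t))) * hL2 t ht
        - (de*(t*(1-t)*(u1*l2*(1-t) - u2*l1*t))) * hw t
    have hWne : ((Polynomial.C u0*(1-Polynomial.X)^3 + Polynomial.C u1*(Polynomial.X*(1-Polynomial.X)^2) + Polynomial.C u2*(Polynomial.X^2*(1-Polynomial.X)) + Polynomial.C u3*Polynomial.X^3) : Polynomial ℝ) ≠ 0 := by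
      intro hh
      apply hu0n
      have hev := congrArg (Polynomial.eval 0) hh
      simpa using hev
    have hSfin := Polynomial.finite_setOf_isRoot hWne
    have hsubS : {t : ℝ | Polynomial.IsRoot (Polynomial.C u0*(1-Polynomial.X)^3 + Polynomial.C u1*(Polynomial.X*(1-Polynomial.X)^2) + Polynomial.C u2*(Polynomial.X^2*(1-Polynomial.X)) + Polynomial.C u3*Polynomial.X^3) t}ᶜ ⊆ {t : ℝ | w t ≠ 0} := by
      intro t ht
      simp only [Set.mem_compl_iff, Set.mem_setOf_eq, Polynomial.IsRoot.def] at ht ⊢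
      intro hwt
      apply ht
      simp only [Polynomial.eval_add, Polynomial.eval_mul, Polynomial.eval_pow, Polynomial.eval_sub, Polynomial.eval_one, Polynomial.eval_C, Polynomial.eval_X]
      rw [hw] at hwt
      linarith [hwt]
    have hSinf : ({t : ℝ | w t ≠ 0} \ {(0:ℝ), 1}).Infinite :=
      ((hSfin.infinite_compl).mono hsubS).diff (Set.toFinite _)
    have hKall : ∀ t : ℝ, al * (t*(1-t)) * (u1*l2*(1-t) - u2*l1*t)^2 + be * t^2 * ((u1*l2*(1-t) - u2*l1*t)*(u2*l3*(1-t) - u3*l2*t)) + ga * (t*(1-t)) * ((u2*l3*(1-t) - u3*l2*t)*(u1*l0*t - u0*l1*(1-t))) + de * ((u1*l2*(1-t) - u2*l1*t)*(u0*(1-t)^3 + u1*(t*(1-t)^2) + u2*(t^2*(1-t)) + u3*t^3)) = 0 := by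
      have hKev : ∀ t : ℝ, Polynomial.eval t (Polynomial.C al * (Polynomial.X*(1-Polynomial.X)) * (Polynomial.C (u1*l2)*(1-Polynomial.X) - Polynomial.C (u2*l1)*Polynomial.X)^2 + Polynomial.C be * Polynomial.X^2 * ((Polynomial.C (u1*l2)*(1-Polynomial.X) - Polynomial.C (u2*l1)*Polynomial.X)*(Polynomial.C (u2*l3)*(1-Polynomial.X) - Polynomial.C (u3*l2)*Polynomial.X)) + Polynomial.C ga * (Polynomial.X*(1-Polynomial.X)) * ((Polynomial.C (u2*l3)*(1-Polynomial.X) - Polynomial.C (u3*l2)*Polynomial.X)*(Polynomial.C (u1*l0)*Polynomial.X - Polynomial.C (u0*l1)*(1-Polynomial.X))) + Polynomial.C de * ((Polynomial.C (u1*l2)*(1-Polynomial.X) - Polynomial.C (u2*l1)*Polynomial.X)*(Polynomial.C u0*(1-Polynomial.X)^3 + Polynomial.C u1*(Polynomial.X*(1-Polynomial.X)^2) + Polynomial.C u2*(Polynomial.X^2*(1-Polynomial.X)) + Polynomial.C u3*Polynomial.X^3))) = al * (t*(1-t)) * (u1*l2*(1-t) - u2*l1*t)^2 + be * t^2 * ((u1*l2*(1-t)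 - u2*l1*t)*(u2*l3*(1-t) - u3*l2*t)) + ga * (t*(1-t)) * ((u2*l3*(1-t) - u3*l2*t)*(u1*l0*t - u0*l1*(1-t))) + de * ((u1*l2*(1-t) - u2*l1*t)*(u0*(1-t)^3 + u1*(t*(1-t)^2) + u2*(t^2*(1-t)) + u3*t^3)) := by
        intro t
        simp only [Polynomial.eval_add, Polynomial.eval_mul, Polynomial.eval_pow, Polynomial.eval_sub, Polynomial.eval_one, Polynomial.eval_C, Polynomial.eval_X]
      intro t
      rw [← hKev t]
      apply poly_zero_everywhere hSinf
      intro s hs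
      simp only [Set.mem_diff, Set.mem_setOf_eq, Set.mem_insert_iff, Set.mem_singleton_iff,
        not_or] at hs
      obtain ⟨hws, hs0, hs1⟩ := hs
      rw [hKev s]
      have hs1' : (1:ℝ) - s ≠ 0 := sub_ne_zero.mpr (Ne.symm hs1)
      have hprod : s*(1-s) * (al * (s*(1-s)) * (u1*l2*(1-s) - u2*l1*s)^2 + be * s^2 * ((u1*l2*(1-s) - u2*l1*s)*(u2*l3*(1-s) - u3*l2*s)) + ga * (s*(1-s)) * ((u2*l3*(1-s) - u3*l2*s)*(u1*l0*s - u0*l1*(1-s))) + de * ((u1*l2*(1-s) - u2*l1*s)*(u0*(1-s)^3 + u1*(s*(1-s)^2) + u2*(s^2*(1-s)) + u3*s^3))) = 0 := by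
        linear_combination hG s hws
      exact (mul_eq_zero.mp hprod).resolve_left (mul_ne_zero hs0 hs1')
    have hde : de = 0 := by
      have h0 := hKall 0
      have h0' : de * (u1*l2*u0) = 0 := by linear_combination h0
      exact (mul_eq_zero.mp h0').resolve_right
        (mul_ne_zero (mul_ne_zero hu1n hnc2) hu0n)
    subst hde
    have hbe : be = 0 := by
      have h1 := hKall 1
      have h1' : be * (u2*l1*(u3*l2)) = 0 := by linear_combination h1
      exact (mul_eq_zero.mp h1').resolve_right
        (mul_ne_zero (mul_ne_zero hu2n hnc1) (mul_ne_zero hu3n hnc2))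
    subst hbe
    have hMall : ∀ t : ℝ, al * (u1*l2*(1-t) - u2*l1*t)^2 + ga * ((u2*l3*(1-t) - u3*l2*t)*(u1*l0*t - u0*l1*(1-t))) = 0 := by
      have hMev : ∀ t : ℝ, Polynomial.eval t (Polynomial.C al * (Polynomial.C (u1*l2)*(1-Polynomial.X) - Polynomial.C (u2*l1)*Polynomial.X)^2 + Polynomial.C ga * ((Polynomial.C (u2*l3)*(1-Polynomial.X) - Polynomial.C (u3*l2)*Polynomial.X)*(Polynomial.C (u1*l0)*Polynomial.X - Polynomial.C (u0*l1)*(1-Polynomial.X)))) = al * (u1*l2*(1-t) - u2*l1*t)^2 + ga * ((u2*l3*(1-t) - u3*l2*t)*(u1*l0*t - u0*l1*(1-t))) := by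
        intro t
        simp only [Polynomial.eval_add, Polynomial.eval_mul, Polynomial.eval_pow, Polynomial.eval_sub, Polynomial.eval_one, Polynomial.eval_C, Polynomial.eval_X]
      intro t
      rw [← hMev t]
      apply poly_zero_everywhere
        (((Set.toFinite ({(0:ℝ), 1} : Set ℝ)).infinite_compl))
      intro s hs
      simp only [Set.mem_compl_iff, Set.mem_insert_iff, Set.mem_singleton_iff, not_or] at hs
      obtain ⟨hs0, hs1⟩ := hs
      rw [hMev s]
      have hs1' : (1:ℝ) - s ≠ 0 := sub_ne_zero.mpr (Ne.symm hs1)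
      have hprod : s*(1-s) * (al * (u1*l2*(1-s) - u2*l1*s)^2 + ga * ((u2*l3*(1-s) - u3*l2*s)*(u1*l0*s - u0*l1*(1-s)))) = 0 := by
        linear_combination hKall s
      exact (mul_eq_zero.mp hprod).resolve_left (mul_ne_zero hs0 hs1')
    have hA : al*(u1^2*l2^2) = ga*(u0*u2*(l1*l3)) := by linear_combination hMall 0
    have hB : al*(u2^2*l1^2) = ga*(u1*u3*(l0*l2)) := by linear_combination hMall 1
    have hC : 2*al*(u1*u2*(l1*l2)) = ga*(u1*u2*(l0*l3) + u0*u3*(l1*l2)) := by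
      linear_combination (-4 : ℝ) * hMall (1/2) + hA + hB
    have hganz : ga ≠ 0 := by
      intro hga
      have hal : al = 0 := by
        have h' : al*(u1^2*l2^2) = 0 := by rw [hA, hga, zero_mul]
        exact (mul_eq_zero.mp h').resolve_right
          (mul_ne_zero (pow_ne_zero 2 hu1n) (pow_ne_zero 2 hnc2))
      apply hF0
      apply MvPolynomial.funext
      intro v
      have hv : ![v 0, v 1] = v := by
        funext i; fin_cases i <;> rfl
      have hd := hdec (v 0) (v 1)
      rw [hv] at hd
      have hzero : (l1*l2*l2) * MvPolynomial.eval v F = 0 := by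
        rw [hd, hal, hga]; ring
      have hev0 := (mul_eq_zero.mp hzero).resolve_left
        (mul_ne_zero (mul_ne_zero hnc1 hnc2) hnc2)
      simpa using hev0
    have hPQsq : (ga*(u1*u2*(l0*l3) - u0*u3*(l1*l2)))^2 = 0 := by
      linear_combination (-(ga*(u1*u2*(l0*l3) + u0*u3*(l1*l2)) + 2*al*(u1*u2*(l1*l2)))) * hC
        + (4*al*(u2^2*l1^2)) * hA + (4*ga*(u0*u2*(l1*l3))) * hB
    have hPQ : ga*(u1*u2*(l0*l3) - u0*u3*(l1*l2)) = 0 :=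
      pow_eq_zero_iff two_ne_zero |>.mp hPQsq
    have hQP : u1*u2*(l0*l3) - u0*u3*(l1*l2) = 0 :=
      (mul_eq_zero.mp hPQ).resolve_left hganz
    have hWrel : u1*u2*(al*(l1*l2) - ga*(l0*l3)) = 0 := by
      linear_combination ((1:ℝ)/2) * hC + (-ga/2) * hQP
    have hWrel' : al*(l1*l2) - ga*(l0*l3) = 0 :=
      (mul_eq_zero.mp hWrel).resolve_left (mul_ne_zero hu1n hu2n)
    constructor
    · rw [hphi1]
      have hh : ga*l3*(u0 * u2 * l1 ^ 2 - u1 ^ 2 * l0 * l2) = 0 := by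
        linear_combination (-l1) * hA + (u1^2*l2) * hWrel'
      exact (mul_eq_zero.mp hh).resolve_left (mul_ne_zero hganz hnc3)
    · rw [hphi2]
      have hh : ga*l0*(u1 * u3 * l2 ^ 2 - u2 ^ 2 * l1 * l3) = 0 := by
        linear_combination (-l2) * hB + (u2^2*l1) * hWrel'
      exact (mul_eq_zero.mp hh).resolve_left (mul_ne_zero hganz hnc0)
  · -- reverse direction
    rintro ⟨hph1, hph2⟩
    have he1 : u0 * u2 * l1 ^ 2 - u1 ^ 2 * l0 * l2 = 0 := by rw [← hphi1]; exact hph1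
    have he2 : u1 * u3 * l2 ^ 2 - u2 ^ 2 * l1 * l3 = 0 := by rw [← hphi2]; exact hph2
    have he3 : u1*u2*(l0*l3) - u0*u3*(l1*l2) = 0 := by
      have hk : u1*u2*(l1*l2)*(u1*u2*(l0*l3) - u0*u3*(l1*l2)) = 0 := by
        linear_combination (-(u1*u3*l2^2)) * he1 + (-(u1^2*l0*l2)) * he2
      exact (mul_eq_zero.mp hk).resolve_left
        (mul_ne_zero (mul_ne_zero hu1n hu2n) (mul_ne_zero hnc1 hnc2))
    refine ⟨MvPolynomial.C (l1*l2) * ((MvPolynomial.C (c0.2-c1.2) * MvPolynomial.X 0 + MvPolynomial.C (c1.1-c0.1) * MvPolynomial.X 1 + MvPolynomial.C (c0.1*c1.2-c0.2*c1.1)) * (MvPolynomial.C (c3.2-c2.2) * MvPolynomial.X 0 + MvPolynomial.C (c2.1-c3.1) * MvPolynomial.X 1 + MvPolynomial.C (c3.1*c2.2-c3.2*c2.1))) + MvPolynomial.C (l0*l3) * (MvPolynomial.C (c0.2-c3.2) * MvPolynomial.X 0 + MvPolynomial.C (c3.1-c0.1) * MvPolynomial.X 1 + MvPolynomial.C (c0.1*c3.2-c0.2*c3.1))^2,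 ?_, ?_, ?_⟩
    · intro hFz
      have hev := congrArg (MvPolynomial.eval ![c1.1, c1.2]) hFz
      simp only [map_add, map_mul, map_pow, MvPolynomial.eval_C, MvPolynomial.eval_X, Matrix.cons_val_zero, Matrix.cons_val_one, Matrix.head_cons, map_zero] at hev
      have hzz : l0*l3*l2^2 = 0 := by
        rw [Hl2]
        linear_combination hev
      exact (mul_ne_zero (mul_ne_zero hnc0 hnc3) (pow_ne_zero 2 hnc2)) hzz
    · have hlin : ∀ aa bb cc : ℝ,
          (MvPolynomial.C aa * MvPolynomial.X 0 + MvPolynomial.C bb * MvPolynomial.X 1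
            + MvPolynomial.C cc : MvPolynomial (Fin 2) ℝ).totalDegree ≤ 1 := by
        intro aa bb cc
        refine le_trans (MvPolynomial.totalDegree_add _ _) (max_le (le_trans
          (MvPolynomial.totalDegree_add _ _) (max_le ?_ ?_)) ?_)
        · exact le_trans (MvPolynomial.totalDegree_mul _ _)
            (by simp [MvPolynomial.totalDegree_C, MvPolynomial.totalDegree_X])
        · exact le_trans (MvPolynomial.totalDegree_mul _ _)
            (by simp [MvPolynomial.totalDegree_C, MvPolynomial.totalDegree_X])
        · simp [MvPolynomial.totalDegree_C]
      refine le_trans (MvPolynomial.totalDegree_add _ _) (max_le ?_ ?_)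
      · refine le_trans (MvPolynomial.totalDegree_mul _ _) (le_trans (add_le_add
          (le_of_eq (MvPolynomial.totalDegree_C _))
          (le_trans (MvPolynomial.totalDegree_mul _ _)
            (add_le_add (hlin _ _ _) (hlin _ _ _)))) (by norm_num))
      · refine le_trans (MvPolynomial.totalDegree_mul _ _) (le_trans (add_le_add
          (le_of_eq (MvPolynomial.totalDegree_C _))
          (le_trans (MvPolynomial.totalDegree_pow _ 2)
            (mul_le_mul_right (hlin _ _ _) 2))) (by norm_num))
    · intro t ht
      have hEV : MvPolynomial.eval ![(p t).1, (p t).2] (MvPolynomial.C (l1*l2) * ((MvPolynomial.C (c0.2-c1.2) * MvPolynomial.X 0 + MvPolynomial.C (c1.1-c0.1) * MvPolynomial.X 1 + MvPolynomial.C (c0.1*c1.2-c0.2*c1.1)) * (MvPolynomial.C (c3.2-c2.2) * MvPolynomial.X 0 + MvPolynomial.C (c2.1-c3.1) * MvPolynomial.X 1 + MvPolynomial.C (c3.1*c2.2-c3.2*c2.1))) + MvPolynomial.C (l0*l3) * (MvPolynomial.C (c0.2-c3.2) * MvPolynomial.X 0 + MvPolynomial.C (c3.1-c0.1) * MvPolynomial.X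 1 + MvPolynomial.C (c0.1*c3.2-c0.2*c3.1))^2) =
          l1*l2*(((c0.2-c1.2)*(p t).1 + (c1.1-c0.1)*(p t).2 + (c0.1*c1.2-c0.2*c1.1))*((c3.2-c2.2)*(p t).1 + (c2.1-c3.1)*(p t).2 + (c3.1*c2.2-c3.2*c2.1))) + l0*l3*((c0.2-c3.2)*(p t).1 + (c3.1-c0.1)*(p t).2 + (c0.1*c3.2-c0.2*c3.1))^2 := by
        simp only [map_add, map_mul, map_pow, MvPolynomial.eval_C, MvPolynomial.eval_X, Matrix.cons_val_zero, Matrix.cons_val_one, Matrix.head_cons]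
      rw [hEV]
      have hm : (w t)^2 * (l1*l2*(((c0.2-c1.2)*(p t).1 + (c1.1-c0.1)*(p t).2 + (c0.1*c1.2-c0.2*c1.1))*((c3.2-c2.2)*(p t).1 + (c2.1-c3.1)*(p t).2 + (c3.1*c2.2-c3.2*c2.1))) + l0*l3*((c0.2-c3.2)*(p t).1 + (c3.1-c0.1)*(p t).2 + (c0.1*c3.2-c0.2*c3.1))^2) = 0 := by
        linear_combination (l1*l2*(w t * ((c3.2-c2.2)*(p t).1 + (c2.1-c3.1)*(p t).2 + (c3.1*c2.2-c3.2*c2.1)))) * hL1 t ht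
          + (l1*l2*(t^2*(u2*l3*(1-t) - u3*l2*t))) * hL2 t ht
          + (l0*l3*(w t * ((c0.2-c3.2)*(p t).1 + (c3.1-c0.1)*(p t).2 + (c0.1*c3.2-c0.2*c3.1)) + (t*(1-t)*(u1*l2*(1-t) - u2*l1*t)))) * hL0 t ht
          + (-(t^2*(1-t)^4*l2*l3)) * he1 + (-(t^4*(1-t)^2*l0*l1)) * he2
          + (-(t^3*(1-t)^3*l1*l2)) * he3
      exact (mul_eq_zero.mp hm).resolve_left (pow_ne_zero 2 ht)
end
end

section
/- Suppose all weights are nonzero (wi ≠ 0 for i = 0,1,2,3) and no three of the control points are collinear (λi ≠ 0 for i = 0,1,2,3). Then the following three statements are equivalent: (1) the rational cubic Bézier curve degenerates to a conic; (2) the coefficients b0, b1, b2, b3 are all zero; (3) the polynomial q is identically zero. -/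
noncomputable section

open MvPolynomial

def mexp (i j : ℕ) : Fin 2 →₀ ℕ := Finsupp.single 0 i + Finsupp.single 1 j

lemma mexp_apply0 (i j : ℕ) : mexp i j 0 = i := by
  simp [mexp, Finsupp.single_apply]

lemma mexp_apply1 (i j : ℕ) : mexp i j 1 = j := by
  simp [mexp, Finsupp.single_apply]

lemma eq_mexp_iff (d : Fin 2 →₀ ℕ) (i j : ℕ) : d = mexp i j ↔ d 0 = i ∧ d 1 = j := by
  constructor
  · rintro rfl; exact ⟨mexp_apply0 .., mexp_apply1 ..⟩
  · rintro ⟨h0, h1⟩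
    ext a
    match a with
    | 0 => rw [mexp_apply0]; exact h0
    | 1 => rw [mexp_apply1]; exact h1

lemma fin2_support_sum (d : Fin 2 →₀ ℕ) : ∑ i ∈ d.support, d i = d 0 + d 1 := by
  rw [Finset.sum_subset (Finset.subset_univ d.support)]
  · exact Fin.sum_univ_two d
  · intro x _ hx
    simpa using hx

/-- Any bivariate polynomial of total degree at most 2 is a quadratic. -/
lemma quad_repr (F : MvPolynomial (Fin 2) ℝ) (h : F.totalDegree ≤ 2) :
    F = monomial (mexp 0 0) (coeff (mexp 0 0) F) + monomial (mexp 1 0) (coeff (mexp 1 0) F)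
      + monomial (mexp 0 1) (coeff (mexp 0 1) F) + monomial (mexp 2 0) (coeff (mexp 2 0) F)
      + monomial (mexp 1 1) (coeff (mexp 1 1) F) + monomial (mexp 0 2) (coeff (mexp 0 2) F) := by
  apply MvPolynomial.ext
  intro d
  simp only [coeff_add, coeff_monomial]
  rcases le_or_gt (d 0 + d 1) 2 with hle | hlt
  · have hd : d = mexp (d 0) (d 1) := (eq_mexp_iff d (d 0) (d 1)).2 ⟨rfl, rfl⟩
    have h0 : d 0 ≤ 2 := by omega
    have h1 : d 1 ≤ 2 := by omega
    set i := d 0 with hi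
    set j := d 1 with hj
    clear_value i j
    rw [hd]
    have hij : i + j ≤ 2 := hle
    clear hd hi hj hle
    interval_cases i <;> interval_cases j <;>
      first
      | (exfalso; omega)
      | simp [eq_mexp_iff, mexp_apply0, mexp_apply1]
  · rw [coeff_eq_zero_of_totalDegree_lt (by rw [fin2_support_sum]; omega)]
    have hne : ∀ i j : ℕ, i + j ≤ 2 → ¬ (mexp i j = d) := by
      intro i j hij he
      rw [eq_comm, eq_mexp_iff] at he
      omega
    rw [if_neg (hne 0 0 (by norm_num)), if_neg (hne 1 0 (by norm_num)),
      if_neg (hne 0 1 (by norm_num)), if_neg (hne 2 0 (by norm_num)),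
      if_neg (hne 1 1 (by norm_num)), if_neg (hne 0 2 (by norm_num))]
    norm_num

lemma eval_mexp (i j : ℕ) (a : ℝ) (x y : ℝ) :
    eval ![x, y] (monomial (mexp i j) a) = a * x ^ i * y ^ j := by
  rw [eval_monomial]
  rw [mexp, Finsupp.prod_add_index (by simp) (by intros; rw [pow_add])]
  rw [Finsupp.prod_single_index (by simp), Finsupp.prod_single_index (by simp)]
  simp [mul_assoc]

/-- Evaluation of a bivariate quadratic. -/
lemma quad_eval (F : MvPolynomial (Fin 2) ℝ) (h : F.totalDegree ≤ 2) (x y : ℝ) :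
    eval ![x, y] F = coeff (mexp 0 0) F + coeff (mexp 1 0) F * x + coeff (mexp 0 1) F * y
      + coeff (mexp 2 0) F * x ^ 2 + coeff (mexp 1 1) F * (x * y)
      + coeff (mexp 0 2) F * y ^ 2 := by
  conv_lhs => rw [quad_repr F h]
  simp only [map_add, eval_mexp]
  ring

lemma quad_zero (F : MvPolynomial (Fin 2) ℝ) (h : F.totalDegree ≤ 2)
    (h1 : coeff (mexp 0 0) F = 0) (h2 : coeff (mexp 1 0) F = 0) (h3 : coeff (mexp 0 1) F = 0)
    (h4 : coeff (mexp 2 0) F = 0) (h5 : coeff (mexp 1 1) F = 0) (h6 : coeff (mexp 0 2) F = 0) :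
    F = 0 := by
  rw [quad_repr F h, h1, h2, h3, h4, h5, h6]
  simp

/-- The polynomial of the affine line through two points. -/
def linP (p q : ℝ × ℝ) : MvPolynomial (Fin 2) ℝ :=
  C (p.2 - q.2) * X 0 - C (p.1 - q.1) * X 1 + C (p.1 * q.2 - p.2 * q.1)

lemma linP_eval (p q : ℝ × ℝ) (x y : ℝ) :
    eval ![x, y] (linP p q) = lineL p q x y := by
  simp [linP, lineL, det3]
  ring

lemma linP_totalDegree' (p q : ℝ × ℝ) : (linP p q).totalDegree ≤ 1 := by
  refine le_trans (totalDegree_add _ _) (max_le (le_trans (totalDegree_sub _ _) (max_le ?_ ?_)) ?_)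
  · exact le_trans (totalDegree_mul _ _) (by rw [totalDegree_C, totalDegree_X])
  · exact le_trans (totalDegree_mul _ _) (by rw [totalDegree_C, totalDegree_X])
  · rw [totalDegree_C]; norm_num

lemma linP_totalDegree (p q : ℝ × ℝ) : (linP p q).totalDegree ≤ 1 := linP_totalDegree' p q

lemma CmulLin_totalDegree (k : ℝ) (p q : ℝ × ℝ) :
    (C k * linP p q).totalDegree ≤ 1 := by
  refine le_trans (totalDegree_mul _ _) ?_
  rw [totalDegree_C]
  simpa using linP_totalDegree p q

set_option maxHeartbeats 4000000 in
/-- equivalence of conic degeneration, vanishing of all coefficients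
`bᵢ`, and the identical vanishing of `q`. -/
theorem conic_degeneration_tfae (c0 c1 c2 c3 : ℝ × ℝ) (w0 w1 w2 w3 : ℝ)
    (hw0 : w0 ≠ 0) (hw1 : w1 ≠ 0) (hw2 : w2 ≠ 0) (hw3 : w3 ≠ 0)
    (u0 u1 u2 u3 : ℝ)
    (hu0 : u0 = w0) (hu1 : u1 = 3 * w1) (hu2 : u2 = 3 * w2) (hu3 : u3 = w3)
    (l0 l1 l2 l3 : ℝ)
    (hl0 : l0 = lam c3 c2 c1) (hl1 : l1 = lam c2 c3 c0)
    (hl2 : l2 = lam c1 c0 c3) (hl3 : l3 = lam c0 c1 c2)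
    (hnc0 : l0 ≠ 0) (hnc1 : l1 ≠ 0) (hnc2 : l2 ≠ 0) (hnc3 : l3 ≠ 0)
    (K0 K1 K2 K3 : ℝ → ℝ → ℝ)
    (hK0 : ∀ x y, K0 x y = lineL c0 c1 x y * lineL c1 c2 x y * lineL c2 c3 x y)
    (hK1 : ∀ x y, K1 x y = lineL c0 c1 x y * (lineL c1 c3 x y) ^ 2)
    (hK2 : ∀ x y, K2 x y = (lineL c0 c2 x y) ^ 2 * lineL c2 c3 x y)
    (hK3 : ∀ x y, K3 x y = (lineL c0 c3 x y) ^ 3)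
    (U L b0 b1 b2 b3 : ℝ)
    (hU : U = u0 * u1 * u2 * u3) (hL : L = l0 * l1 * l2 * l3)
    (hb0 : b0 = -(l1 ^ 2 * l2 ^ 2 * U - u1 ^ 2 * u2 ^ 2 * L))
    (hb1 : b1 = l1 ^ 3 * l3 * U - u1 ^ 3 * u3 * L)
    (hb2 : b2 = l0 * l2 ^ 3 * U - u0 * u2 ^ 3 * L)
    (hb3 : b3 = l0 ^ 2 * l3 ^ 2 * U - u0 ^ 2 * u3 ^ 2 * L)
    (q : ℝ → ℝ → ℝ)
    (hq : ∀ x y, q x y = b0 * K0 x y + b1 * K1 x y + b2 * K2 x y + b3 * K3 x y)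
    (w : ℝ → ℝ) (p : ℝ → ℝ × ℝ)
    (hw : ∀ t, w t = u0 * (1 - t) ^ 3 + u1 * (t * (1 - t) ^ 2) + u2 * (t ^ 2 * (1 - t)) + u3 * t ^ 3)
    (hp : ∀ t, w t ≠ 0 → p t = (w t)⁻¹ •
      ((u0 * (1 - t) ^ 3) • c0 + (u1 * (t * (1 - t) ^ 2)) • c1 +
        (u2 * (t ^ 2 * (1 - t))) • c2 + (u3 * t ^ 3) • c3)) :
    ((∃ F : MvPolynomial (Fin 2) ℝ, F ≠ 0 ∧ F.totalDegree ≤ 2 ∧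
          ∀ t, w t ≠ 0 → MvPolynomial.eval ![(p t).1, (p t).2] F = 0) ↔
        (b0 = 0 ∧ b1 = 0 ∧ b2 = 0 ∧ b3 = 0)) ∧
      ((b0 = 0 ∧ b1 = 0 ∧ b2 = 0 ∧ b3 = 0) ↔ ∀ x y : ℝ, q x y = 0) := by
  have hU0 : u0 ≠ 0 := by rw [hu0]; exact hw0
  have hU1 : u1 ≠ 0 := by rw [hu1]; exact mul_ne_zero three_ne_zero hw1
  have hU2 : u2 ≠ 0 := by rw [hu2]; exact mul_ne_zero three_ne_zero hw2
  have hU3 : u3 ≠ 0 := by rw [hu3]; exact hw3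
  constructor
  · constructor
    · -- (1) ⇒ (2)
      rintro ⟨F, hF0, hFdeg, hFv⟩
      set f00 := coeff (mexp 0 0) F with hf00
      set f10 := coeff (mexp 1 0) F with hf10
      set f01 := coeff (mexp 0 1) F with hf01
      set f20 := coeff (mexp 2 0) F with hf20
      set f11 := coeff (mexp 1 1) F with hf11
      set f02 := coeff (mexp 0 2) F with hf02
      set ψ00 := f20*c0.1^2 + f11*(c0.1*c0.2) + f02*c0.2^2 + f10*c0.1 + f01*c0.2 + f00 with hp00
      set ψ11 := f20*c1.1^2 + f11*(c1.1*c1.2) + f02*c1.2^2 + f10*c1.1 + f01*c1.2 + f00 with hp11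
      set ψ22 := f20*c2.1^2 + f11*(c2.1*c2.2) + f02*c2.2^2 + f10*c2.1 + f01*c2.2 + f00 with hp22
      set ψ01 := 2*f20*(c0.1*c1.1) + f11*(c0.1*c1.2 + c1.1*c0.2) + 2*f02*(c0.2*c1.2)
        + f10*(c0.1 + c1.1) + f01*(c0.2 + c1.2) + 2*f00 with hp01
      set ψ02 := 2*f20*(c0.1*c2.1) + f11*(c0.1*c2.2 + c2.1*c0.2) + 2*f02*(c0.2*c2.2)
        + f10*(c0.1 + c2.1) + f01*(c0.2 + c2.2) + 2*f00 with hp02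
      set ψ12 := 2*f20*(c1.1*c2.1) + f11*(c1.1*c2.2 + c2.1*c1.2) + 2*f02*(c1.2*c2.2)
        + f10*(c1.1 + c2.1) + f01*(c1.2 + c2.2) + 2*f00 with hp12
      set ΦP : Polynomial ℝ := Polynomial.C ψ00 * (Polynomial.C (u0*l3) - Polynomial.C (u3*l0) * Polynomial.X^3)^2 + Polynomial.C ψ01 * ((Polynomial.C (u0*l3) - Polynomial.C (u3*l0) * Polynomial.X^3)*(Polynomial.C (u1*l3) * Polynomial.X - Polynomial.C (u3*l1) * Polynomial.X^3)) + Polynomial.C ψ02 * ((Polynomial.C (u0*l3) - Polynomial.C (u3*l0) * Polynomial.X^3)*(Polynomial.C (u2*l3) * Polynomial.X^2 - Polynomial.C (u3*l2) * Polynomial.X^3)) + Polynomial.C ψ11 * (Polynomial.C (u1*l3) * Polynomial.X - Polynomial.C (u3*l1) * Polynomial.X^3)^2 + Polynomial.C ψ12 * ((Polynomial.C (u1*l3) * Polynomial.X - Polynomial.C (u3*l1) * Polynomial.X^3)*(Polynomial.C (u2*l3) * Polynomial.X^2 - Polynomial.C (u3*l2) * Polynomial.X^3)) + Polynomial.C ψ22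 * (Polynomial.C (u2*l3) * Polynomial.X^2 - Polynomial.C (u3*l2) * Polynomial.X^3)^2 with hPhiP
      have hPeval : ∀ s : ℝ, ΦP.eval s = ψ00*((u0*l3) - (u3*l0)*s^3)^2 + ψ01*(((u0*l3) - (u3*l0)*s^3)*((u1*l3)*s - (u3*l1)*s^3)) + ψ02*(((u0*l3) - (u3*l0)*s^3)*((u2*l3)*s^2 - (u3*l2)*s^3)) + ψ11*((u1*l3)*s - (u3*l1)*s^3)^2 + ψ12*(((u1*l3)*s - (u3*l1)*s^3)*((u2*l3)*s^2 - (u3*l2)*s^3)) + ψ22*((u2*l3)*s^2 - (u3*l2)*s^3)^2 := by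
        intro s
        rw [hPhiP]
        simp only [Polynomial.eval_add, Polynomial.eval_mul, Polynomial.eval_sub,
          Polynomial.eval_pow, Polynomial.eval_C, Polynomial.eval_X]
      have hroot : ∀ s : ℝ, (u0 + u1*s + u2*s^2 + u3*s^3) ≠ 0 → (1 + s) ≠ 0 → ΦP.eval s = 0 := by
        intro s hWs hs1
        have hwts : w (s/(1+s)) * (1+s)^3 = (u0 + u1*s + u2*s^2 + u3*s^3) := by
          rw [hw]
          field_simp
          ring
        have hwtne2 : w (s/(1+s)) ≠ 0 := by
          intro h0
          apply hWs
          rw [← hwts, h0, zero_mul]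
        have hpt := hp (s/(1+s)) hwtne2
        have hx0 : (p (s/(1+s))).1 * (w (s/(1+s))) * (1+s)^3 = (u0*c0.1 + u1*s*c1.1 + u2*s^2*c2.1 + u3*s^3*c3.1) := by
          rw [hpt]
          simp only [Prod.smul_fst, Prod.fst_add, smul_eq_mul]
          field_simp
          ring
        have hy0 : (p (s/(1+s))).2 * (w (s/(1+s))) * (1+s)^3 = (u0*c0.2 + u1*s*c1.2 + u2*s^2*c2.2 + u3*s^3*c3.2) := by
          rw [hpt]
          simp only [Prod.smul_snd, Prod.snd_add, smul_eq_mul]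
          field_simp
          ring
        have hx : (p (s/(1+s))).1 * (u0 + u1*s + u2*s^2 + u3*s^3) = (u0*c0.1 + u1*s*c1.1 + u2*s^2*c2.1 + u3*s^3*c3.1) := by
          rw [← hwts, ← mul_assoc]; exact hx0
        have hy : (p (s/(1+s))).2 * (u0 + u1*s + u2*s^2 + u3*s^3) = (u0*c0.2 + u1*s*c1.2 + u2*s^2*c2.2 + u3*s^3*c3.2) := by
          rw [← hwts, ← mul_assoc]; exact hy0
        have hFt := hFv (s/(1+s)) hwtne2
        rw [quad_eval F hFdeg] at hFt
        rw [← hf00, ← hf10, ← hf01, ← hf20, ← hf11, ← hf02] at hFt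
        have hclear : f00*(u0 + u1*s + u2*s^2 + u3*s^3)^2 + f10*((u0*c0.1 + u1*s*c1.1 + u2*s^2*c2.1 + u3*s^3*c3.1)*(u0 + u1*s + u2*s^2 + u3*s^3)) + f01*((u0*c0.2 + u1*s*c1.2 + u2*s^2*c2.2 + u3*s^3*c3.2)*(u0 + u1*s + u2*s^2 + u3*s^3))
            + f20*(u0*c0.1 + u1*s*c1.1 + u2*s^2*c2.1 + u3*s^3*c3.1)^2 + f11*((u0*c0.1 + u1*s*c1.1 + u2*s^2*c2.1 + u3*s^3*c3.1)*(u0*c0.2 + u1*s*c1.2 + u2*s^2*c2.2 + u3*s^3*c3.2)) + f02*(u0*c0.2 + u1*s*c1.2 + u2*s^2*c2.2 + u3*s^3*c3.2)^2 = 0 := by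
          linear_combination ((u0 + u1*s + u2*s^2 + u3*s^3)^2) * hFt
            - (f10*(u0 + u1*s + u2*s^2 + u3*s^3) + f20*((p (s/(1+s))).1*(u0 + u1*s + u2*s^2 + u3*s^3) + (u0*c0.1 + u1*s*c1.1 + u2*s^2*c2.1 + u3*s^3*c3.1)) + f11*((p (s/(1+s))).2*(u0 + u1*s + u2*s^2 + u3*s^3))) * hx
            - (f01*(u0 + u1*s + u2*s^2 + u3*s^3) + f02*((p (s/(1+s))).2*(u0 + u1*s + u2*s^2 + u3*s^3) + (u0*c0.2 + u1*s*c1.2 + u2*s^2*c2.2 + u3*s^3*c3.2)) + f11*(u0*c0.1 + u1*s*c1.1 + u2*s^2*c2.1 + u3*s^3*c3.1)) * hy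
        rw [hPeval s]
        rw [hp00, hp01, hp02, hp11, hp12, hp22, hl0, hl1, hl2, hl3]
        simp only [lam, det3]
        linear_combination ((c0.1*(c1.2 - c2.2) - c0.2*(c1.1 - c2.1) + (c1.1*c2.2 - c1.2*c2.1))^2) * hclear
      have hcont : Continuous fun s : ℝ => (u0 + u1*s + u2*s^2 + u3*s^3) := by continuity
      have hop : IsOpen {s : ℝ | (u0 + u1*s + u2*s^2 + u3*s^3) ≠ 0} := isOpen_ne.preimage hcont
      have h0mem : (0:ℝ) ∈ {s : ℝ | (u0 + u1*s + u2*s^2 + u3*s^3) ≠ 0} := by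
        show (u0 + u1*0 + u2*0^2 + u3*0^3) ≠ 0
        simpa using hU0
      obtain ⟨ε, hε, hball⟩ := Metric.isOpen_iff.mp hop 0 h0mem
      set δ := min ε (1/2) with hδ
      have hδ0 : 0 < δ := lt_min hε (by norm_num)
      have hPz : ΦP = 0 := by
        apply Polynomial.eq_zero_of_infinite_isRoot
        apply Set.Infinite.mono ?_ (Set.Ioo_infinite (show -δ < δ by linarith))
        intro s hs
        obtain ⟨hs1, hs2⟩ := hs
        have hδε : δ ≤ ε := by rw [hδ]; exact min_le_left _ _
        have hsb : s ∈ Metric.ball (0:ℝ) ε := by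
          rw [Metric.mem_ball, Real.dist_eq, sub_zero, abs_lt]
          constructor <;> linarith
        have hWne := hball hsb
        have hs1ne : (1:ℝ) + s ≠ 0 := by
          have hd2 : δ ≤ 1/2 := by rw [hδ]; exact min_le_right _ _
          intro h
          have : s = -1 := by linarith
          rw [this] at hs1
          linarith
        exact hroot s hWne hs1ne
      have hall : ∀ s : ℝ, ψ00*((u0*l3) - (u3*l0)*s^3)^2 + ψ01*(((u0*l3) - (u3*l0)*s^3)*((u1*l3)*s - (u3*l1)*s^3)) + ψ02*(((u0*l3) - (u3*l0)*s^3)*((u2*l3)*s^2 - (u3*l2)*s^3)) + ψ11*((u1*l3)*s - (u3*l1)*s^3)^2 + ψ12*(((u1*l3)*s - (u3*l1)*s^3)*((u2*l3)*s^2 - (u3*l2)*s^3)) + ψ22*((u2*l3)*s^2 - (u3*l2)*s^3)^2 = 0 := by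
        intro s
        have h0 : ΦP.eval s = 0 := by rw [hPz]; simp
        rw [hPeval s] at h0
        exact h0
      have hC0 : ψ00 * (u0*l3)^2 = 0 := by linear_combination hall 0
      have hC1 : ψ01 * ((u0*l3)*(u1*l3)) = 0 := by
        linear_combination (3/4 : ℝ)*hall 1 - (3/4 : ℝ)*hall (-1) - (3/20 : ℝ)*hall 2
          + (3/20 : ℝ)*hall (-2) + (1/60 : ℝ)*hall 3 - (1/60 : ℝ)*hall (-3)
      have hC2 : ψ02 * ((u0*l3)*(u2*l3)) + ψ11 * (u1*l3)^2 = 0 := by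
        linear_combination (-49/36 : ℝ)*hall 0 + (3/4 : ℝ)*hall 1 + (3/4 : ℝ)*hall (-1)
          - (3/40 : ℝ)*hall 2 - (3/40 : ℝ)*hall (-2) + (1/180 : ℝ)*hall 3 + (1/180 : ℝ)*hall (-3)
      have hC3f : -2*ψ00*((u0*l3)*(u3*l0)) - ψ01*((u0*l3)*(u3*l1)) - ψ02*((u0*l3)*(u3*l2)) + ψ12*((u1*l3)*(u2*l3)) = 0 := by
        linear_combination (-13/48 : ℝ)*hall 1 + (13/48 : ℝ)*hall (-1) + (1/6 : ℝ)*hall 2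
          - (1/6 : ℝ)*hall (-2) - (1/48 : ℝ)*hall 3 + (1/48 : ℝ)*hall (-3)
      have hC4f : -ψ01*((u1*l3)*(u3*l0)) - 2*ψ11*((u1*l3)*(u3*l1)) - ψ12*((u1*l3)*(u3*l2)) + ψ22*(u2*l3)^2 = 0 := by
        linear_combination (7/18 : ℝ)*hall 0 - (13/48 : ℝ)*hall 1 - (13/48 : ℝ)*hall (-1)
          + (1/12 : ℝ)*hall 2 + (1/12 : ℝ)*hall (-2) - (1/144 : ℝ)*hall 3 - (1/144 : ℝ)*hall (-3)
      have hC5 : -ψ02*((u2*l3)*(u3*l0)) - ψ12*((u2*l3)*(u3*l1)) - 2*ψ22*((u2*l3)*(u3*l2)) = 0 := by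
        linear_combination (1/48 : ℝ)*hall 1 - (1/48 : ℝ)*hall (-1) - (1/60 : ℝ)*hall 2
          + (1/60 : ℝ)*hall (-2) + (1/240 : ℝ)*hall 3 - (1/240 : ℝ)*hall (-3)
      have hC6f : ψ00*(u3*l0)^2 + ψ01*((u3*l0)*(u3*l1)) + ψ02*((u3*l0)*(u3*l2)) + ψ11*(u3*l1)^2
          + ψ12*((u3*l1)*(u3*l2)) + ψ22*(u3*l2)^2 = 0 := by
        linear_combination (-1/36 : ℝ)*hall 0 + (1/48 : ℝ)*hall 1 + (1/48 : ℝ)*hall (-1)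
          - (1/120 : ℝ)*hall 2 - (1/120 : ℝ)*hall (-2) + (1/720 : ℝ)*hall 3 + (1/720 : ℝ)*hall (-3)
      have hAne : (u0*l3) ≠ 0 := mul_ne_zero hU0 hnc3
      have hBne : (u1*l3) ≠ 0 := mul_ne_zero hU1 hnc3
      have hCne : (u2*l3) ≠ 0 := mul_ne_zero hU2 hnc3
      have hRne : (u3*l2) ≠ 0 := mul_ne_zero hU3 hnc2
      have hψ00z : ψ00 = 0 :=
        (mul_eq_zero.mp hC0).resolve_right (pow_ne_zero _ hAne)
      have hψ01z : ψ01 = 0 :=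
        (mul_eq_zero.mp hC1).resolve_right (mul_ne_zero hAne hBne)
      have hC3 : ψ12*((u1*l3)*(u2*l3)) - ψ02*((u0*l3)*(u3*l2)) = 0 := by
        linear_combination hC3f + (2*((u0*l3)*(u3*l0)))*hψ00z + (((u0*l3)*(u3*l1)))*hψ01z
      have hC4 : -2*ψ11*((u1*l3)*(u3*l1)) - ψ12*((u1*l3)*(u3*l2)) + ψ22*(u2*l3)^2 = 0 := by
        linear_combination hC4f + (((u1*l3)*(u3*l0)))*hψ01z
      have hC6 : ψ02*((u3*l0)*(u3*l2)) + ψ11*(u3*l1)^2 + ψ12*((u3*l1)*(u3*l2)) + ψ22*(u3*l2)^2 = 0 := by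
        linear_combination hC6f - ((u3*l0)^2)*hψ00z - (((u3*l0)*(u3*l1)))*hψ01z
      by_cases hψ02z : ψ02 = 0
      · exfalso
        have hψ12z : ψ12 = 0 := by
          have h : ψ12*((u1*l3)*(u2*l3)) = 0 := by
            linear_combination hC3 + (((u0*l3)*(u3*l2)))*hψ02z
          exact (mul_eq_zero.mp h).resolve_right (mul_ne_zero hBne hCne)
        have hψ11z : ψ11 = 0 := by
          have h : ψ11*(u1*l3)^2 = 0 := by
            linear_combination hC2 - (((u0*l3)*(u2*l3)))*hψ02z
          exact (mul_eq_zero.mp h).resolve_right (pow_ne_zero _ hBne)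
        have hψ22z : ψ22 = 0 := by
          have h : ψ22*(u2*l3)^2 = 0 := by
            linear_combination hC4 + (2*((u1*l3)*(u3*l1)))*hψ11z + (((u1*l3)*(u3*l2)))*hψ12z
          exact (mul_eq_zero.mp h).resolve_right (pow_ne_zero _ hCne)
        have hRl3 : (c0.1*(c1.2 - c2.2) - c0.2*(c1.1 - c2.1) + (c1.1*c2.2 - c1.2*c2.1)) ≠ 0 := by
          have heq : lam c0 c1 c2 = (c0.1*(c1.2 - c2.2) - c0.2*(c1.1 - c2.1) + (c1.1*c2.2 - c1.2*c2.1)) := rfl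
          rw [← heq, ← hl3]
          exact hnc3
        have hphi : ∀ Xv Yv Wv : ℝ, (f20*Xv^2 + f11*(Xv*Yv) + f02*Yv^2 + f10*(Xv*Wv) + f01*(Yv*Wv) + f00*Wv^2) = 0 := by
          intro Xv Yv Wv
          have hrec : (c0.1*(c1.2 - c2.2) - c0.2*(c1.1 - c2.1) + (c1.1*c2.2 - c1.2*c2.1))^2 * (f20*Xv^2 + f11*(Xv*Yv) + f02*Yv^2 + f10*(Xv*Wv) + f01*(Yv*Wv) + f00*Wv^2)
              = ψ00*(Xv*(c1.2 - c2.2) - Yv*(c1.1 - c2.1) + Wv*(c1.1*c2.2 - c1.2*c2.1))^2 + ψ01*((Xv*(c1.2 - c2.2) - Yv*(c1.1 - c2.1) + Wv*(c1.1*c2.2 - c1.2*c2.1))*(c0.1*(Yv - Wv*c2.2) - c0.2*(Xv - Wv*c2.1) + (Xv*c2.2 - Yv*c2.1))) + ψ02*((Xv*(c1.2 - c2.2) - Yv*(c1.1 - c2.1) + Wv*(c1.1*c2.2 - c1.2*c2.1))*(c0.1*(c1.2*Wv - Yv) - c0.2*(c1.1*Wv - Xv) + (c1.1*Yv - c1.2*Xv)))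 + ψ11*(c0.1*(Yv - Wv*c2.2) - c0.2*(Xv - Wv*c2.1) + (Xv*c2.2 - Yv*c2.1))^2
                + ψ12*((c0.1*(Yv - Wv*c2.2) - c0.2*(Xv - Wv*c2.1) + (Xv*c2.2 - Yv*c2.1))*(c0.1*(c1.2*Wv - Yv) - c0.2*(c1.1*Wv - Xv) + (c1.1*Yv - c1.2*Xv))) + ψ22*(c0.1*(c1.2*Wv - Yv) - c0.2*(c1.1*Wv - Xv) + (c1.1*Yv - c1.2*Xv))^2 := by
            rw [hp00, hp01, hp02, hp11, hp12, hp22]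
            ring
          rw [hψ00z, hψ01z, hψ02z, hψ11z, hψ12z, hψ22z] at hrec
          simp only [zero_mul, add_zero, zero_add] at hrec
          exact (mul_eq_zero.mp hrec).resolve_left (pow_ne_zero _ hRl3)
        have hf20z : f20 = 0 := by linear_combination hphi 1 0 0
        have hf00z : f00 = 0 := by linear_combination hphi 0 0 1
        have hf02z : f02 = 0 := by linear_combination hphi 0 1 0
        have hf10z : f10 = 0 := by linear_combination hphi 1 0 1 - hf20z - hf00z
        have hf01z : f01 = 0 := by linear_combination hphi 0 1 1 - hf02z - hf00z
        have hf11z : f11 = 0 := by linear_combination hphi 1 1 0 - hf20z - hf02z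
        exact hF0 (quad_zero F hFdeg (by rw [← hf00]; exact hf00z)
          (by rw [← hf10]; exact hf10z) (by rw [← hf01]; exact hf01z)
          (by rw [← hf20]; exact hf20z) (by rw [← hf11]; exact hf11z)
          (by rw [← hf02]; exact hf02z))
      · have hD1 : ψ02 * ((u1*l3) * (2*(u0*l3)*(u1*l3)*(u3*l2)^3 - 3*(u0*l3)*(u2*l3)^2*(u3*l1)*(u3*l2) + (u3*l0)*(u1*l3)*(u2*l3)^3)) = 0 := by
          linear_combination (-(4*(u1*l3)*(u2*l3)*(u3*l1)*(u3*l2)))*hC2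
            + (-(2*(u1*l3)^2*(u3*l2)^2 + (u1*l3)*(u2*l3)^2*(u3*l1)))*hC3
            + (-(2*(u3*l2)*(u1*l3)^2*(u2*l3)))*hC4 + (-((u1*l3)^2*(u2*l3)^2))*hC5
        have hd1 : (2*(u0*l3)*(u1*l3)*(u3*l2)^3 - 3*(u0*l3)*(u2*l3)^2*(u3*l1)*(u3*l2) + (u3*l0)*(u1*l3)*(u2*l3)^3) = 0 := by
          rcases mul_eq_zero.mp hD1 with h | h
          · exact absurd h hψ02z
          · exact (mul_eq_zero.mp h).resolve_left hBne
        have hD2 : ψ02 * ((u3*l2) * ((u1*l3)^2*(u2*l3)*(u3*l0)*(u3*l2) - 2*(u0*l3)*(u2*l3)^2*(u3*l1)^2 + (u0*l3)*(u1*l3)*(u3*l1)*(u3*l2)^2)) = 0 := by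
          linear_combination (2*(u3*l2)*(u1*l3)^2*(u2*l3))*hC6 + (-(2*(u3*l1)^2*(u3*l2)*(u2*l3)))*hC2
            + (-((u1*l3)*(u3*l1)*(u3*l2)^2))*hC3 + ((u1*l3)^2*(u3*l2)^2)*hC5
        have hd2 : ((u1*l3)^2*(u2*l3)*(u3*l0)*(u3*l2) - 2*(u0*l3)*(u2*l3)^2*(u3*l1)^2 + (u0*l3)*(u1*l3)*(u3*l1)*(u3*l2)^2) = 0 := by
          rcases mul_eq_zero.mp hD2 with h | h
          · exact absurd h hψ02z
          · exact (mul_eq_zero.mp h).resolve_left hRne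
        have hG2 : ((u1*l3)*(u3*l2)^2 - (u2*l3)^2*(u3*l1)) = 0 := by
          have hsq : 2*(u0*l3)*((u1*l3)*(u3*l2)^2 - (u2*l3)^2*(u3*l1))^2 = 0 := by
            linear_combination ((u1*l3)*(u3*l2))*hd1 - ((u2*l3)^2)*hd2
          have h2A : (2*(u0*l3) : ℝ) ≠ 0 := mul_ne_zero two_ne_zero hAne
          have hg : ((u1*l3)*(u3*l2)^2 - (u2*l3)^2*(u3*l1))^2 = 0 := by
            rcases mul_eq_zero.mp hsq with h | h
            · exact absurd h h2A
            · exact h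
          exact pow_eq_zero_iff two_ne_zero |>.mp hg
        have hG1 : ((u0*l3)*(u2*l3)*(u3*l1)^2 - (u1*l3)^2*(u3*l0)*(u3*l2)) = 0 := by
          have hc : (u2*l3)*((u0*l3)*(u2*l3)*(u3*l1)^2 - (u1*l3)^2*(u3*l0)*(u3*l2)) = 0 := by
            linear_combination ((u0*l3)*(u3*l1))*hG2 - hd2
          exact (mul_eq_zero.mp hc).resolve_left hCne
        have h1 : l1^2*(u0*u2) = u1^2*(l0*l2) := by
          apply mul_left_cancel₀ (show (u3^2*l3^2 : ℝ) ≠ 0 from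
            mul_ne_zero (pow_ne_zero _ hU3) (pow_ne_zero _ hnc3))
          linear_combination hG1
        have h2 : l2^2*(u1*u3) = u2^2*(l1*l3) := by
          apply mul_left_cancel₀ (show (u3*l3 : ℝ) ≠ 0 from mul_ne_zero hU3 hnc3)
          linear_combination hG2
        refine ⟨?_, ?_, ?_, ?_⟩
        · rw [hb0, hU, hL]
          linear_combination (-(l2^2*(u1*u3)))*h1 - (u1^2*(l0*l2))*h2
        · rw [hb1, hU, hL]
          linear_combination (l1*l3*(u1*u3))*h1
        · rw [hb2, hU, hL]
          linear_combination (l0*l2*(u0*u2))*h2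
        · rw [hb3, hU, hL]
          have h3 : l0*l3*(u1*u2) = u0*u3*(l1*l2) := by
            apply mul_left_cancel₀ (mul_ne_zero hU2 hnc1)
            linear_combination (-(u1*l0))*h2 - (u3*l2)*h1
          linear_combination (l0*l3*(u0*u3))*h3
    · -- (2) ⇒ (1)
      rintro ⟨hb0z, hb1z, hb2z, hb3z⟩
      have e1 : l1 ^ 3 * l3 * (u0 * u1 * u2 * u3) - u1 ^ 3 * u3 * (l0 * l1 * l2 * l3) = 0 := by
        rw [← hU, ← hL, ← hb1]; exact hb1z
      have e2 : l0 * l2 ^ 3 * (u0 * u1 * u2 * u3) - u0 * u2 ^ 3 * (l0 * l1 * l2 * l3) = 0 := by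
        rw [← hU, ← hL, ← hb2]; exact hb2z
      have h1 : l1 ^ 2 * (u0 * u2) = u1 ^ 2 * (l0 * l2) := by
        apply mul_left_cancel₀ (mul_ne_zero (mul_ne_zero (mul_ne_zero hnc1 hnc3) hU1) hU3)
        linear_combination e1
      have h2 : l2 ^ 2 * (u1 * u3) = u2 ^ 2 * (l1 * l3) := by
        apply mul_left_cancel₀ (mul_ne_zero (mul_ne_zero (mul_ne_zero hnc0 hnc2) hU0) hU2)
        linear_combination e2
      have hl2e : l2 = l1 ^ 2 * (u0 * u2) / (u1 ^ 2 * l0) := by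
        rw [eq_div_iff (mul_ne_zero (pow_ne_zero _ hU1) hnc0)]
        linear_combination -h1
      have hl3e : l3 = l2 ^ 2 * (u1 * u3) / (u2 ^ 2 * l1) := by
        rw [eq_div_iff (mul_ne_zero (pow_ne_zero _ hU2) hnc1)]
        linear_combination -h2
      refine ⟨C u0 * (C (u2 * l1 * u0) * linP c2 c0 - C (u1 ^ 2 * l0) * linP c0 c1) ^ 2
        - C (u1 * u2 * l1 * u0) *
          ((C (u1 * l1 * u0) * linP c1 c2 - C (u0 * l0 * u1) * linP c2 c0) * linP c0 c1),
        ?_, ?_, ?_⟩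
      · intro hzero
        have hval := congrArg (MvPolynomial.eval ![c2.1, c2.2]) hzero
        simp only [map_sub, map_mul, map_add, map_pow, eval_C, linP_eval, map_zero] at hval
        have hA : lineL c1 c2 c2.1 c2.2 = 0 := by simp only [lineL, det3]; ring
        have hB : lineL c2 c0 c2.1 c2.2 = 0 := by simp only [lineL, det3]; ring
        have hCv : lineL c0 c1 c2.1 c2.2 = l3 := by
          rw [hl3]; simp only [lineL, lam, det3]; ring
        rw [hA, hB, hCv] at hval
        have hne : u0 * (u1 ^ 2 * l0 * l3) ^ 2 ≠ 0 :=
          mul_ne_zero hU0 (pow_ne_zero _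
            (mul_ne_zero (mul_ne_zero (pow_ne_zero _ hU1) hnc0) hnc3))
        apply hne
        linear_combination hval
      · refine le_trans (totalDegree_sub _ _) (max_le ?_ ?_)
        · refine le_trans (totalDegree_mul _ _) ?_
          rw [totalDegree_C, Nat.zero_add]
          refine le_trans (totalDegree_pow _ _) ?_
          have hd1 : (C (u2 * l1 * u0) * linP c2 c0
              - C (u1 ^ 2 * l0) * linP c0 c1).totalDegree ≤ 1 :=
            le_trans (totalDegree_sub _ _)
              (max_le (CmulLin_totalDegree _ _ _) (CmulLin_totalDegree _ _ _))
          omega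
        · refine le_trans (totalDegree_mul _ _) ?_
          rw [totalDegree_C, Nat.zero_add]
          refine le_trans (totalDegree_mul _ _) ?_
          have hd2 : (C (u1 * l1 * u0) * linP c1 c2
              - C (u0 * l0 * u1) * linP c2 c0).totalDegree ≤ 1 :=
            le_trans (totalDegree_sub _ _)
              (max_le (CmulLin_totalDegree _ _ _) (CmulLin_totalDegree _ _ _))
          have hd3 := linP_totalDegree c0 c1
          omega
      · intro t hwtne
        have hpt := hp t hwtne
        have hx : (p t).1 * w t = u0 * (1 - t) ^ 3 * c0.1 + u1 * (t * (1 - t) ^ 2) * c1.1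
            + u2 * (t ^ 2 * (1 - t)) * c2.1 + u3 * t ^ 3 * c3.1 := by
          rw [hpt]
          simp only [Prod.smul_fst, Prod.fst_add, smul_eq_mul]
          field_simp
        have hy : (p t).2 * w t = u0 * (1 - t) ^ 3 * c0.2 + u1 * (t * (1 - t) ^ 2) * c1.2
            + u2 * (t ^ 2 * (1 - t)) * c2.2 + u3 * t ^ 3 * c3.2 := by
          rw [hpt]
          simp only [Prod.smul_snd, Prod.snd_add, smul_eq_mul]
          field_simp
        have hwteq := hw t
        have hLA : lineL c1 c2 (p t).1 (p t).2 * w t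
            = u0 * l3 * (1 - t) ^ 3 - u3 * l0 * t ^ 3 := by
          rw [hl0, hl3]
          simp only [lineL, lam, det3]
          linear_combination (c1.2 - c2.2) * hx - (c1.1 - c2.1) * hy
            + (c1.1 * c2.2 - c1.2 * c2.1) * hwteq
        have hLB : lineL c2 c0 (p t).1 (p t).2 * w t
            = u1 * l3 * (t * (1 - t) ^ 2) - u3 * l1 * t ^ 3 := by
          rw [hl1, hl3]
          simp only [lineL, lam, det3]
          linear_combination (c2.2 - c0.2) * hx - (c2.1 - c0.1) * hy
            + (c2.1 * c0.2 - c2.2 * c0.1) * hwteq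
        have hLC : lineL c0 c1 (p t).1 (p t).2 * w t
            = u2 * l3 * (t ^ 2 * (1 - t)) - u3 * l2 * t ^ 3 := by
          rw [hl2, hl3]
          simp only [lineL, lam, det3]
          linear_combination (c0.2 - c1.2) * hx - (c0.1 - c1.1) * hy
            + (c0.1 * c1.2 - c0.2 * c1.1) * hwteq
        have hLA' : lineL c1 c2 (p t).1 (p t).2
            = (u0 * l3 * (1 - t) ^ 3 - u3 * l0 * t ^ 3) / w t := by
          rw [eq_div_iff hwtne]; exact hLA
        have hLB' : lineL c2 c0 (p t).1 (p t).2
            = (u1 * l3 * (t * (1 - t) ^ 2) - u3 * l1 * t ^ 3) / w t := by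
          rw [eq_div_iff hwtne]; exact hLB
        have hLC' : lineL c0 c1 (p t).1 (p t).2
            = (u2 * l3 * (t ^ 2 * (1 - t)) - u3 * l2 * t ^ 3) / w t := by
          rw [eq_div_iff hwtne]; exact hLC
        simp only [map_sub, map_mul, map_add, map_pow, eval_C, linP_eval]
        rw [hLA', hLB', hLC', hl3e, hl2e]
        field_simp
        ring
  · constructor
    · -- (2) ⇒ (3)
      rintro ⟨h0, h1, h2, h3⟩ x y
      rw [hq, h0, h1, h2, h3]
      ring
    · -- (3) ⇒ (2)
      intro hqz
      have E0 := hqz c1.1 c1.2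
      have E1 := hqz c2.1 c2.2
      have Em1 := hqz (2*c1.1 - c2.1) (2*c1.2 - c2.2)
      have E2 := hqz (2*c2.1 - c1.1) (2*c2.2 - c1.2)
      rw [hq, hK0, hK1, hK2, hK3] at E0 E1 Em1 E2
      simp only [lineL, det3] at E0 E1 Em1 E2
      have h3 : b3 * (lam c2 c3 c0 * lam c1 c0 c3 ^ 2) = 0 := by
        simp only [lam, det3]
        linear_combination (-15/18 : ℝ)*E0 - (6/18 : ℝ)*E1 + (2/18 : ℝ)*Em1 + (1/18 : ℝ)*E2
      have hb3z : b3 = 0 := by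
        rcases mul_eq_zero.mp h3 with h | h
        · exact h
        · rw [← hl1, ← hl2] at h
          exact absurd h (mul_ne_zero hnc1 (pow_ne_zero _ hnc2))
      rw [hb3z] at E0 E1
      have h2' : b2 * (lam c3 c2 c1 * lam c0 c1 c2 ^ 2) = 0 := by
        simp only [lam, det3]
        linear_combination (-1 : ℝ)*E0
      have hb2z : b2 = 0 := by
        rcases mul_eq_zero.mp h2' with h | h
        · exact h
        · rw [← hl0, ← hl3] at h
          exact absurd h (mul_ne_zero hnc0 (pow_ne_zero _ hnc3))
      have h1' : b1 * (lam c0 c1 c2 * lam c3 c2 c1 ^ 2) = 0 := by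
        simp only [lam, det3]
        linear_combination E1
      have hb1z : b1 = 0 := by
        rcases mul_eq_zero.mp h1' with h | h
        · exact h
        · rw [← hl0, ← hl3] at h
          exact absurd h (mul_ne_zero hnc3 (pow_ne_zero _ hnc0))
      have Em := hqz ((c1.1 + c3.1)/2) ((c1.2 + c3.2)/2)
      rw [hq, hK0, hK1, hK2, hK3, hb1z, hb2z, hb3z] at Em
      simp only [lineL, det3] at Em
      have h0' : b0 * (lam c1 c0 c3 * lam c3 c2 c1 ^ 2) = 0 := by
        simp only [lam, det3]
        linear_combination (-8 : ℝ)*Em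
      have hb0z : b0 = 0 := by
        rcases mul_eq_zero.mp h0' with h | h
        · exact h
        · rw [← hl2, ← hl0] at h
          exact absurd h (mul_ne_zero hnc2 (pow_ne_zero _ hnc0))
      exact ⟨hb0z, hb1z, hb2z, hb3z⟩

end
end

section
/- Suppose no three of the points c0, c1, c2, c3 are collinear (λi ≠ 0 for i = 0,1,2,3). Then the four polynomials K0, K1, K2, K3 are linearly independent in ℝ[x,y]: if β0, β1, β2, β3 ∈ ℝ satisfy β0K0(x,y) + β1K1(x,y) + β2K2(x,y) + β3K3(x,y) = 0 for all (x,y) ∈ ℝ², then β0 = β1 = β2 = β3 = 0. -/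
noncomputable section

/-- linear independence of the four basis functions `K₀, K₁, K₂, K₃`. -/
theorem basis_functions_linearly_independent (c0 c1 c2 c3 : ℝ × ℝ)
    (l0 l1 l2 l3 : ℝ)
    (hl0 : l0 = lam c3 c2 c1) (hl1 : l1 = lam c2 c3 c0)
    (hl2 : l2 = lam c1 c0 c3) (hl3 : l3 = lam c0 c1 c2)
    (hnc0 : l0 ≠ 0) (hnc1 : l1 ≠ 0) (hnc2 : l2 ≠ 0) (hnc3 : l3 ≠ 0)
    (K0 K1 K2 K3 : ℝ → ℝ → ℝ)
    (hK0 : ∀ x y, K0 x y = lineL c0 c1 x y * lineL c1 c2 x y * lineL c2 c3 x y)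
    (hK1 : ∀ x y, K1 x y = lineL c0 c1 x y * (lineL c1 c3 x y) ^ 2)
    (hK2 : ∀ x y, K2 x y = (lineL c0 c2 x y) ^ 2 * lineL c2 c3 x y)
    (hK3 : ∀ x y, K3 x y = (lineL c0 c3 x y) ^ 3) :
    ∀ β0 β1 β2 β3 : ℝ,
      (∀ x y : ℝ, β0 * K0 x y + β1 * K1 x y + β2 * K2 x y + β3 * K3 x y = 0) →
      β0 = 0 ∧ β1 = 0 ∧ β2 = 0 ∧ β3 = 0 := by
  subst hl0 hl1 hl2 hl3
  intro β0 β1 β2 β3 h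
  have H : ∀ x y : ℝ,
      β0 * (lineL c0 c1 x y * lineL c1 c2 x y * lineL c2 c3 x y) +
      β1 * (lineL c0 c1 x y * (lineL c1 c3 x y) ^ 2) +
      β2 * ((lineL c0 c2 x y) ^ 2 * lineL c2 c3 x y) +
      β3 * (lineL c0 c3 x y) ^ 3 = 0 := by
    intro x y
    rw [← hK0, ← hK1, ← hK2, ← hK3]
    exact h x y
  simp only [lineL, det3] at H
  have e1 := H c1.1 c1.2
  have e2 := H (2 * c1.1 - c0.1) (2 * c1.2 - c0.2)
  -- β2 = 0
  have hb2 : β2 * (lam c2 c3 c0 * (lam c0 c1 c2) ^ 2) = 0 := by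
    simp only [lam, det3]
    linear_combination 2 * e1 - (1 / 4) * e2
  have hβ2 : β2 = 0 :=
    (mul_eq_zero.mp hb2).resolve_right
      (mul_ne_zero hnc1 (pow_ne_zero 2 hnc3))
  subst hβ2
  -- β3 = 0
  have hb3 : β3 * (lam c1 c0 c3) ^ 3 = 0 := by
    simp only [lam, det3]
    linear_combination (1 / 4) * e2 - e1
  have hβ3 : β3 = 0 := (mul_eq_zero.mp hb3).resolve_right (pow_ne_zero 3 hnc2)
  subst hβ3
  have e3 := H (2 * c3.1 - c0.1) (2 * c3.2 - c0.2)
  have e4 := H (2 * c0.1 - c3.1) (2 * c0.2 - c3.2)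
  -- β0 = 0
  have hb0 : β0 * (lam c3 c2 c1 * (lam c2 c3 c0 * lam c1 c0 c3)) = 0 := by
    simp only [lam, det3]
    linear_combination (-(1 : ℝ) / 6) * e4 - (1 / 3) * e3
  have hβ0 : β0 = 0 :=
    (mul_eq_zero.mp hb0).resolve_right
      (mul_ne_zero hnc0 (mul_ne_zero hnc1 hnc2))
  subst hβ0
  -- β1 = 0
  have hb1 : β1 * (lam c1 c0 c3) ^ 3 = 0 := by
    simp only [lam, det3]
    linear_combination (1 / 4) * e4
  have hβ1 : β1 = 0 := (mul_eq_zero.mp hb1).resolve_right (pow_ne_zero 3 hnc2)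
  exact ⟨rfl, hβ1, rfl, rfl⟩
end
end

section
/- For any control points and weights, any distinct indices i, j ∈ {0,1,2,3}, and every t ∈ ℝ with w(t) ≠ 0, the identity w(t)·L_{ij}(p(t)) = Σ_{k=0}^{3} λ_{ijk}·u_k·t^k(1−t)^{3−k} holds (the terms with k = i or k = j vanish since λ_{ijk} = 0 when two indices coincide). -/
noncomputable section

/-- Bernstein expansion of `w(t)·L_{ij}(p(t))` with coefficients
`λ_{ijk}·u_k`. -/
theorem line_composed_with_curve (c : Fin 4 → ℝ × ℝ) (w0 w1 w2 w3 : ℝ)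
    (u : Fin 4 → ℝ) (hu : u = ![w0, 3 * w1, 3 * w2, w3])
    (w : ℝ → ℝ) (p : ℝ → ℝ × ℝ)
    (hw : ∀ t, w t = u 0 * (1 - t) ^ 3 + u 1 * (t * (1 - t) ^ 2) +
      u 2 * (t ^ 2 * (1 - t)) + u 3 * t ^ 3)
    (hp : ∀ t, w t ≠ 0 → p t = (w t)⁻¹ •
      ((u 0 * (1 - t) ^ 3) • c 0 + (u 1 * (t * (1 - t) ^ 2)) • c 1 +
        (u 2 * (t ^ 2 * (1 - t))) • c 2 + (u 3 * t ^ 3) • c 3)) :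
    ∀ i j : Fin 4, i ≠ j → ∀ t, w t ≠ 0 →
      w t * lineL (c i) (c j) (p t).1 (p t).2 =
        lam (c i) (c j) (c 0) * u 0 * (1 - t) ^ 3 +
          lam (c i) (c j) (c 1) * u 1 * (t * (1 - t) ^ 2) +
          lam (c i) (c j) (c 2) * u 2 * (t ^ 2 * (1 - t)) +
          lam (c i) (c j) (c 3) * u 3 * t ^ 3 := by
  intro i j hij t hwt
  rw [hp t hwt]
  simp only [lineL, lam, det3, Prod.smul_mk, smul_eq_mul, Prod.fst_add, Prod.snd_add,
    Prod.smul_fst, Prod.smul_snd]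
  field_simp
  rw [hw t]
  ring
end
end

section
/- For any control points and weights and every t ∈ ℝ with w(t) ≠ 0, one has w(t)³·K_i(p(t)) = t²(1−t)²·G_i(t) for each i = 0,1,2,3, where G0(t) = (u2λ3(1−t) − u3λ2t)·(u0λ3(1−t)³ − u3λ0t³)·(u0λ1(1−t) − u1λ0t), G1(t) = (u2λ3(1−t) − u3λ2t)·(u0λ2(1−t)² − u2λ0t²)², G2(t) = (u1λ3(1−t)² − u3λ1t²)²·(u0λ1(1−t) − u1λ0t), and G3(t) = t(1−t)·(u1λ2(1−t) − u2λ1t)³. -/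
noncomputable section

/-- `w(t)³·Kᵢ(p(t)) = t²(1−t)²·Gᵢ(t)` for `i = 0,1,2,3`. -/
theorem basis_functions_composed_with_curve (c0 c1 c2 c3 : ℝ × ℝ) (w0 w1 w2 w3 : ℝ)
    (u0 u1 u2 u3 : ℝ)
    (hu0 : u0 = w0) (hu1 : u1 = 3 * w1) (hu2 : u2 = 3 * w2) (hu3 : u3 = w3)
    (l0 l1 l2 l3 : ℝ)
    (hl0 : l0 = lam c3 c2 c1) (hl1 : l1 = lam c2 c3 c0)
    (hl2 : l2 = lam c1 c0 c3) (hl3 : l3 = lam c0 c1 c2)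
    (K0 K1 K2 K3 : ℝ → ℝ → ℝ)
    (hK0 : ∀ x y, K0 x y = lineL c0 c1 x y * lineL c1 c2 x y * lineL c2 c3 x y)
    (hK1 : ∀ x y, K1 x y = lineL c0 c1 x y * (lineL c1 c3 x y) ^ 2)
    (hK2 : ∀ x y, K2 x y = (lineL c0 c2 x y) ^ 2 * lineL c2 c3 x y)
    (hK3 : ∀ x y, K3 x y = (lineL c0 c3 x y) ^ 3)
    (w : ℝ → ℝ) (p : ℝ → ℝ × ℝ)
    (hw : ∀ t, w t = u0 * (1 - t) ^ 3 + u1 * (t * (1 - t) ^ 2) + u2 * (t ^ 2 * (1 - t)) + u3 * t ^ 3)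
    (hp : ∀ t, w t ≠ 0 → p t = (w t)⁻¹ •
      ((u0 * (1 - t) ^ 3) • c0 + (u1 * (t * (1 - t) ^ 2)) • c1 +
        (u2 * (t ^ 2 * (1 - t))) • c2 + (u3 * t ^ 3) • c3))
    (G0 G1 G2 G3 : ℝ → ℝ)
    (hG0 : ∀ t, G0 t = (u2 * l3 * (1 - t) - u3 * l2 * t) *
      (u0 * l3 * (1 - t) ^ 3 - u3 * l0 * t ^ 3) * (u0 * l1 * (1 - t) - u1 * l0 * t))
    (hG1 : ∀ t, G1 t = (u2 * l3 * (1 - t) - u3 * l2 * t) *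
      (u0 * l2 * (1 - t) ^ 2 - u2 * l0 * t ^ 2) ^ 2)
    (hG2 : ∀ t, G2 t = (u1 * l3 * (1 - t) ^ 2 - u3 * l1 * t ^ 2) ^ 2 *
      (u0 * l1 * (1 - t) - u1 * l0 * t))
    (hG3 : ∀ t, G3 t = t * (1 - t) * (u1 * l2 * (1 - t) - u2 * l1 * t) ^ 3) :
    ∀ t, w t ≠ 0 →
      (w t) ^ 3 * K0 (p t).1 (p t).2 = t ^ 2 * (1 - t) ^ 2 * G0 t ∧
      (w t) ^ 3 * K1 (p t).1 (p t).2 = t ^ 2 * (1 - t) ^ 2 * G1 t ∧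
      (w t) ^ 3 * K2 (p t).1 (p t).2 = t ^ 2 * (1 - t) ^ 2 * G2 t ∧
      (w t) ^ 3 * K3 (p t).1 (p t).2 = t ^ 2 * (1 - t) ^ 2 * G3 t := by
  intro t ht
  have hpt := hp t ht
  have ht' : u0 * (1 - t) ^ 3 + u1 * (t * (1 - t) ^ 2) + u2 * (t ^ 2 * (1 - t)) + u3 * t ^ 3 ≠ 0 := by
    rw [← hw]; exact ht
  have hx : (p t).1 = (u0 * (1 - t) ^ 3 + u1 * (t * (1 - t) ^ 2) + u2 * (t ^ 2 * (1 - t)) + u3 * t ^ 3)⁻¹ *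
      (u0 * (1 - t) ^ 3 * c0.1 + u1 * (t * (1 - t) ^ 2) * c1.1 +
        u2 * (t ^ 2 * (1 - t)) * c2.1 + u3 * t ^ 3 * c3.1) := by
    rw [hpt, hw]; simp [Prod.fst_add, smul_eq_mul]; ring
  have hy : (p t).2 = (u0 * (1 - t) ^ 3 + u1 * (t * (1 - t) ^ 2) + u2 * (t ^ 2 * (1 - t)) + u3 * t ^ 3)⁻¹ *
      (u0 * (1 - t) ^ 3 * c0.2 + u1 * (t * (1 - t) ^ 2) * c1.2 +
        u2 * (t ^ 2 * (1 - t)) * c2.2 + u3 * t ^ 3 * c3.2) := by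
    rw [hpt, hw]; simp [Prod.snd_add, smul_eq_mul]; ring
  have hxW : (u0 * (1 - t) ^ 3 + u1 * (t * (1 - t) ^ 2) + u2 * (t ^ 2 * (1 - t)) + u3 * t ^ 3) * (p t).1 =
      u0 * (1 - t) ^ 3 * c0.1 + u1 * (t * (1 - t) ^ 2) * c1.1 +
        u2 * (t ^ 2 * (1 - t)) * c2.1 + u3 * t ^ 3 * c3.1 := by
    rw [hx, ← mul_assoc, mul_inv_cancel₀ ht', one_mul]
  have hyW : (u0 * (1 - t) ^ 3 + u1 * (t * (1 - t) ^ 2) + u2 * (t ^ 2 * (1 - t)) + u3 * t ^ 3) * (p t).2 =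
      u0 * (1 - t) ^ 3 * c0.2 + u1 * (t * (1 - t) ^ 2) * c1.2 +
        u2 * (t ^ 2 * (1 - t)) * c2.2 + u3 * t ^ 3 * c3.2 := by
    rw [hy, ← mul_assoc, mul_inv_cancel₀ ht', one_mul]
  have e01 : w t * lineL c0 c1 (p t).1 (p t).2 = t ^ 2 * (u2 * l3 * (1 - t) - u3 * l2 * t) := by
    simp only [lineL, det3, hw, hl2, hl3, lam]; linear_combination (c0.2 - c1.2) * hxW - (c0.1 - c1.1) * hyW
  have e12 : w t * lineL c1 c2 (p t).1 (p t).2 = u0 * l3 * (1 - t) ^ 3 - u3 * l0 * t ^ 3 := by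
    simp only [lineL, det3, hw, hl0, hl3, lam]; linear_combination (c1.2 - c2.2) * hxW - (c1.1 - c2.1) * hyW
  have e23 : w t * lineL c2 c3 (p t).1 (p t).2 = (1 - t) ^ 2 * (u0 * l1 * (1 - t) - u1 * l0 * t) := by
    simp only [lineL, det3, hw, hl0, hl1, lam]; linear_combination (c2.2 - c3.2) * hxW - (c2.1 - c3.1) * hyW
  have e13 : w t * lineL c1 c3 (p t).1 (p t).2 = -((1 - t) * (u0 * l2 * (1 - t) ^ 2 - u2 * l0 * t ^ 2)) := by
    simp only [lineL, det3, hw, hl0, hl2, lam]; linear_combination (c1.2 - c3.2) * hxW - (c1.1 - c3.1) * hyW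
  have e02 : w t * lineL c0 c2 (p t).1 (p t).2 = -(t * (u1 * l3 * (1 - t) ^ 2 - u3 * l1 * t ^ 2)) := by
    simp only [lineL, det3, hw, hl1, hl3, lam]; linear_combination (c0.2 - c2.2) * hxW - (c0.1 - c2.1) * hyW
  have e03 : w t * lineL c0 c3 (p t).1 (p t).2 = t * (1 - t) * (u1 * l2 * (1 - t) - u2 * l1 * t) := by
    simp only [lineL, det3, hw, hl1, hl2, lam]; linear_combination (c0.2 - c3.2) * hxW - (c0.1 - c3.1) * hyW
  refine ⟨?_, ?_, ?_, ?_⟩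
  · have h : (w t) ^ 3 * K0 (p t).1 (p t).2 =
        (w t * lineL c0 c1 (p t).1 (p t).2) * (w t * lineL c1 c2 (p t).1 (p t).2) *
          (w t * lineL c2 c3 (p t).1 (p t).2) := by rw [hK0]; ring
    rw [h, e01, e12, e23, hG0]; ring
  · have h : (w t) ^ 3 * K1 (p t).1 (p t).2 =
        (w t * lineL c0 c1 (p t).1 (p t).2) * (w t * lineL c1 c3 (p t).1 (p t).2) ^ 2 := by
      rw [hK1]; ring
    rw [h, e01, e13, hG1]; ring
  · have h : (w t) ^ 3 * K2 (p t).1 (p t).2 =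
        (w t * lineL c0 c2 (p t).1 (p t).2) ^ 2 * (w t * lineL c2 c3 (p t).1 (p t).2) := by
      rw [hK2]; ring
    rw [h, e02, e23, hG2]; ring
  · have h : (w t) ^ 3 * K3 (p t).1 (p t).2 =
        (w t * lineL c0 c3 (p t).1 (p t).2) ^ 3 := by rw [hK3]; ring
    rw [h, e03, hG3]; ring
end
end
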